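/- arXiv:1611.05771 — 3 statements merged into one kernel-verified Lean document; each statement's English description precedes it below -/
import Mathlib

section
/- Assume E[W²] = ∫₀^∞ x² μ_W(dx) < ∞. Let β(x) be the maximal solution of the fixed-point equation f(x) = 1 − exp(−x·λ·∫₀^∞ y f(y) μ_W(dy)) for x ≥ 0, and set β̂ = ∫₀^∞ β(x) μ_W(dx). Then β̂ > 0 if and only if λ·E[W²] > 1. -/
open MeasureTheory Filter Set Topology

lemma one_sub_exp_neg_le (t : ℝ) : 1 - Real.exp (-t) ≤ t := by
  have h := Real.add_one_le_exp (-t)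
  linarith

lemma one_sub_exp_neg_lt (t : ℝ) (ht : 0 < t) : 1 - Real.exp (-t) < t := by
  have h := Real.add_one_lt_exp (x := -t) (by linarith)
  linarith

lemma one_sub_exp_neg_nonneg (t : ℝ) (ht : 0 ≤ t) : 0 ≤ 1 - Real.exp (-t) := by
  have h : Real.exp (-t) ≤ 1 := Real.exp_le_one_iff.mpr (by linarith)
  linarith

lemma one_sub_exp_neg_le_one (t : ℝ) : 1 - Real.exp (-t) ≤ 1 := by
  have := Real.exp_pos (-t); linarith

/-- Theorem 2, second part. Let `W ≥ 0` have law `μ_W` with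
`E W² = ∫ x² μ_W(dx) < ∞`, let `λ = 4 c log 2`, let `β` be the maximal solution of the
fixed-point equation `f(x) = 1 - exp(-x λ ∫ y f(y) μ_W(dy))` on `x ≥ 0`, and set
`β̂ = ∫ β dμ_W`. Then `β̂ > 0` if and only if `λ E W² > 1`. -/
theorem weighted_survival_criterion
    (c : ℝ) (hc : 0 < c)
    (μW : Measure ℝ) [IsProbabilityMeasure μW]
    (hWnonneg : μW (Set.Iio 0) = 0)
    (hW2 : Integrable (fun x => x ^ 2) μW)
    (β : ℝ → ℝ)
    (hβ : ∀ x : ℝ, 0 ≤ x →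
      β x = 1 - Real.exp (-(x * (4 * c * Real.log 2) * ∫ y, y * β y ∂μW)))
    (hβmax : ∀ f : ℝ → ℝ,
      (∀ x : ℝ, 0 ≤ x →
        f x = 1 - Real.exp (-(x * (4 * c * Real.log 2) * ∫ y, y * f y ∂μW))) →
      ∀ x : ℝ, 0 ≤ x → f x ≤ β x) :
    0 < ∫ x, β x ∂μW ↔ 1 < (4 * c * Real.log 2) * ∫ x, x ^ 2 ∂μW := by
  set lam : ℝ := 4 * c * Real.log 2 with hlam_def
  have hlog2 : 0 < Real.log 2 := Real.log_pos (by norm_num)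
  have hlam : 0 < lam := by rw [hlam_def]; positivity
  -- a.e. nonnegativity of W
  have haey : ∀ᵐ y ∂μW, 0 ≤ y := by
    rw [ae_iff]
    have : {y : ℝ | ¬ 0 ≤ y} = Set.Iio 0 := by ext y; simp [not_le]
    rw [this]; exact hWnonneg
  -- integrability of the identity
  have hy_int : Integrable (fun y : ℝ => y) μW := by
    refine Integrable.mono' ((integrable_const (1 : ℝ)).add hW2) aestronglyMeasurable_id ?_
    filter_upwards with y
    have h1 : |y| ≤ 1 + y ^ 2 := by nlinarith [abs_nonneg y, sq_abs y, sq_nonneg (|y| - 1)]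
    simpa using h1
  -- β is nonnegative on [0,∞) by maximality against the zero solution
  have hβ0 : ∀ x : ℝ, 0 ≤ x → 0 ≤ β x := by
    intro x hx
    exact hβmax (fun _ => 0) (by intro z hz; simp) x hx
  set B : ℝ := ∫ y, y * β y ∂μW with hB_def
  have hβformula : ∀ x : ℝ, 0 ≤ x → β x = 1 - Real.exp (-(x * lam * B)) := hβ
  have hβle1 : ∀ x : ℝ, 0 ≤ x → β x ≤ 1 := by
    intro x hx
    rw [hβformula x hx]
    exact one_sub_exp_neg_le_one _
  have hβaem : AEStronglyMeasurable β μW := by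
    refine AEStronglyMeasurable.congr
      (f := fun x => 1 - Real.exp (-(x * lam * B))) ?_ ?_
    · exact (Continuous.aestronglyMeasurable (by fun_prop))
    · filter_upwards [haey] with y hy using (hβformula y hy).symm
  have hβint : Integrable β μW := by
    refine Integrable.mono' (integrable_const (1 : ℝ)) hβaem ?_
    filter_upwards [haey] with y hy
    rw [Real.norm_eq_abs, abs_le]
    exact ⟨by linarith [hβ0 y hy], hβle1 y hy⟩
  have hyβint : Integrable (fun y => y * β y) μW := by
    refine Integrable.mono' hy_int.abs (aestronglyMeasurable_id.mul hβaem) ?_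
    filter_upwards [haey] with y hy
    rw [Real.norm_eq_abs, abs_mul, abs_of_nonneg (hβ0 y hy)]
    calc |y| * β y ≤ |y| * 1 := mul_le_mul_of_nonneg_left (hβle1 y hy) (abs_nonneg y)
      _ = |y| := mul_one _
  have hB_nonneg : 0 ≤ B := by
    rw [hB_def]
    refine integral_nonneg_of_ae ?_
    filter_upwards [haey] with y hy
    exact mul_nonneg hy (hβ0 y hy)
  constructor
  · -- forward direction
    intro hpos
    have hBpos : 0 < B := by
      rcases hB_nonneg.lt_or_eq with h | h
      · exact h
      · exfalso
        have hβz : β =ᵐ[μW] 0 := by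
          filter_upwards [haey] with y hy
          rw [hβformula y hy, ← h]
          simp
        rw [integral_congr_ae hβz] at hpos
        simp at hpos
    have hμpos : 0 < μW {y : ℝ | 0 < y} := by
      by_contra hcon
      push_neg at hcon
      have hz : μW {y : ℝ | 0 < y} = 0 := le_antisymm (by simpa using hcon) (zero_le)
      have hzB : (fun y => y * β y) =ᵐ[μW] 0 := by
        have h1 : ∀ᵐ y ∂μW, ¬ (0 < y) := by
          rw [ae_iff]; simpa using hz
        filter_upwards [haey, h1] with y hy hy2
        have hy0 : y = 0 := le_antisymm (not_lt.mp hy2) hy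
        simp [hy0]
      have hB0 : B = 0 := by rw [hB_def, integral_congr_ae hzB]; simp
      linarith
    set d : ℝ → ℝ := fun y => lam * B * y ^ 2 - y * β y with hd_def
    have hd_nonneg : ∀ᵐ y ∂μW, 0 ≤ d y := by
      filter_upwards [haey] with y hy
      have h1 := one_sub_exp_neg_le (y * lam * B)
      have h2 := mul_le_mul_of_nonneg_left h1 hy
      simp only [hd_def]
      rw [hβformula y hy]
      nlinarith
    have hd_int : Integrable d μW := (hW2.const_mul (lam * B)).sub hyβint
    have hd_pos : 0 < ∫ y, d y ∂μW := by
      rw [integral_pos_iff_support_of_nonneg_ae hd_nonneg hd_int]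
      refine lt_of_lt_of_le hμpos (measure_mono ?_)
      intro y hy
      simp only [Set.mem_setOf_eq] at hy
      have ht : 0 < y * lam * B := by positivity
      have h1 := one_sub_exp_neg_lt (y * lam * B) ht
      have h2 := mul_lt_mul_of_pos_left h1 hy
      simp only [Function.mem_support, hd_def]
      rw [hβformula y hy.le]
      intro hzero
      nlinarith
    have hdi : ∫ y, d y ∂μW = lam * B * (∫ y, y ^ 2 ∂μW) - B := by
      simp only [hd_def]
      rw [integral_sub (hW2.const_mul _) hyβint, integral_const_mul, ← hB_def]
    rw [hdi] at hd_pos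
    nlinarith [hd_pos, hBpos]
  · -- reverse direction
    intro h1
    have hI2 : 0 < ∫ y, y ^ 2 ∂μW := by
      by_contra hcon
      push_neg at hcon
      have := mul_nonpos_of_nonneg_of_nonpos hlam.le hcon
      linarith
    have hμpos : 0 < μW {y : ℝ | 0 < y} := by
      by_contra hcon
      push_neg at hcon
      have hz : μW {y : ℝ | 0 < y} = 0 := le_antisymm (by simpa using hcon) (zero_le)
      have h2 : (fun y : ℝ => y ^ 2) =ᵐ[μW] 0 := by
        have hle : ∀ᵐ y ∂μW, ¬ (0 < y) := by rw [ae_iff]; simpa using hz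
        filter_upwards [haey, hle] with y hy hy2
        have hy0 : y = 0 := le_antisymm (not_lt.mp hy2) hy
        simp [hy0]
      rw [integral_congr_ae h2] at hI2
      simp at hI2
    -- the scalar map g
    set g : ℝ → ℝ := fun b => ∫ y, y * (1 - Real.exp (-(y * lam * b))) ∂μW with hg_def
    have hmeas : ∀ b : ℝ,
        AEStronglyMeasurable (fun y => y * (1 - Real.exp (-(y * lam * b)))) μW := by
      intro b
      exact Continuous.aestronglyMeasurable (by fun_prop)
    have hbound : ∀ b : ℝ, 0 ≤ b →
        ∀ᵐ y ∂μW, ‖y * (1 - Real.exp (-(y * lam * b)))‖ ≤ |y| := by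
      intro b hb
      filter_upwards [haey] with y hy
      have ht : 0 ≤ y * lam * b := by positivity
      have h2 := one_sub_exp_neg_nonneg _ ht
      have h3 := one_sub_exp_neg_le_one (y * lam * b)
      rw [Real.norm_eq_abs, abs_mul, abs_of_nonneg h2]
      calc |y| * (1 - Real.exp (-(y * lam * b))) ≤ |y| * 1 :=
            mul_le_mul_of_nonneg_left h3 (abs_nonneg y)
        _ = |y| := mul_one _
    have hgint : ∀ b : ℝ, 0 ≤ b →
        Integrable (fun y => y * (1 - Real.exp (-(y * lam * b)))) μW :=
      fun b hb => Integrable.mono' hy_int.abs (hmeas b) (hbound b hb)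
    set m : ℝ := ∫ y, |y| ∂μW with hm_def
    have hgle : ∀ b : ℝ, 0 ≤ b → g b ≤ m := by
      intro b hb
      refine integral_mono_ae (hgint b hb) hy_int.abs ?_
      filter_upwards [hbound b hb] with y hy
      calc y * (1 - Real.exp (-(y * lam * b))) ≤ |y * (1 - Real.exp (-(y * lam * b)))| :=
            le_abs_self _
        _ = |y| * |1 - Real.exp (-(y * lam * b))| := abs_mul _ _
        _ ≤ |y| := by simpa [Real.norm_eq_abs, abs_mul] using hy
    -- pointwise limit of the difference quotients
    have hlimpt : ∀ y : ℝ, Tendsto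
        (fun n : ℕ => y * (1 - Real.exp (-(y * lam * (1 / ((n : ℝ) + 1))))) * ((n : ℝ) + 1))
        atTop (𝓝 (lam * y ^ 2)) := by
      intro y
      have hk : HasDerivAt (fun b : ℝ => 1 - Real.exp (-(y * lam * b))) (y * lam) 0 := by
        have h1 : HasDerivAt (fun b : ℝ => -(y * lam * b)) (-(y * lam)) 0 := by
          have h0 := ((hasDerivAt_id (0 : ℝ)).const_mul (y * lam)).neg; rw [mul_one] at h0; exact h0
        have h2 := h1.exp
        have h3 := h2.const_sub 1
        simpa using h3
      have hs := hasDerivAt_iff_tendsto_slope.mp hk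
      have hbn : Tendsto (fun n : ℕ => (1 : ℝ) / ((n : ℝ) + 1)) atTop (𝓝[≠] (0 : ℝ)) := by
        refine tendsto_nhdsWithin_of_tendsto_nhds_of_eventually_within _
          tendsto_one_div_add_atTop_nhds_zero_nat ?_
        filter_upwards with n
        have hp : (0 : ℝ) < 1 / ((n : ℝ) + 1) := by positivity
        exact hp.ne'
      have hs2 := hs.comp hbn
      have heq : (fun n : ℕ => slope (fun b : ℝ => 1 - Real.exp (-(y * lam * b))) 0
            ((1 : ℝ) / ((n : ℝ) + 1)))
          = fun n : ℕ => (1 - Real.exp (-(y * lam * (1 / ((n : ℝ) + 1))))) * ((n : ℝ) + 1) := by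
        funext n
        rw [slope_def_field]
        have hp : ((n : ℝ) + 1) ≠ 0 := by positivity
        field_simp
        simp
      have hs3 : Tendsto
          (fun n : ℕ => (1 - Real.exp (-(y * lam * (1 / ((n : ℝ) + 1))))) * ((n : ℝ) + 1))
          atTop (𝓝 (y * lam)) := by
        rw [← heq]; exact hs2
      have hs4 := hs3.const_mul y
      have hval : y * (y * lam) = lam * y ^ 2 := by ring
      rw [hval] at hs4
      exact hs4.congr (fun n => by ring)
    -- dominated convergence for the difference quotients
    have hFbound : ∀ n : ℕ, ∀ᵐ y ∂μW,
        ‖y * (1 - Real.exp (-(y * lam * (1 / ((n : ℝ) + 1))))) * ((n : ℝ) + 1)‖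
          ≤ lam * y ^ 2 := by
      intro n
      filter_upwards [haey] with y hy
      have hb : (0 : ℝ) < 1 / ((n : ℝ) + 1) := by positivity
      have ht : 0 ≤ y * lam * (1 / ((n : ℝ) + 1)) := by positivity
      have h2 := one_sub_exp_neg_nonneg _ ht
      have h3 := one_sub_exp_neg_le (y * lam * (1 / ((n : ℝ) + 1)))
      have hnn : 0 ≤ y * (1 - Real.exp (-(y * lam * (1 / ((n : ℝ) + 1))))) * ((n : ℝ) + 1) := by
        have : (0:ℝ) ≤ (n : ℝ) + 1 := by positivity
        exact mul_nonneg (mul_nonneg hy h2) this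
      rw [Real.norm_eq_abs, abs_of_nonneg hnn]
      have h4 := mul_le_mul_of_nonneg_left h3 hy
      have h5 : 0 ≤ (n : ℝ) + 1 := by positivity
      have h6 := mul_le_mul_of_nonneg_right h4 h5
      have h7 : y * (y * lam * (1 / ((n : ℝ) + 1))) * ((n : ℝ) + 1) = lam * y ^ 2 := by
        have hp : ((n : ℝ) + 1) ≠ 0 := by positivity
        field_simp
      linarith [h6, h7.symm.le, h7.le]
    have hglim : Tendsto (fun n : ℕ => g (1 / ((n : ℝ) + 1)) * ((n : ℝ) + 1))
        atTop (𝓝 (lam * ∫ y, y ^ 2 ∂μW)) := by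
      have hdc := MeasureTheory.tendsto_integral_of_dominated_convergence (μ := μW)
        (F := fun (n : ℕ) (y : ℝ) =>
          y * (1 - Real.exp (-(y * lam * (1 / ((n : ℝ) + 1))))) * ((n : ℝ) + 1))
        (f := fun y => lam * y ^ 2) (bound := fun y => lam * y ^ 2)
        (fun n => (hmeas (1 / ((n : ℝ) + 1))).mul_const _)
        (hW2.const_mul lam) hFbound
        (Filter.Eventually.of_forall fun y => hlimpt y)
      have hrw1 : ∀ n : ℕ,
          (∫ y, y * (1 - Real.exp (-(y * lam * (1 / ((n : ℝ) + 1))))) * ((n : ℝ) + 1) ∂μW)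
            = g (1 / ((n : ℝ) + 1)) * ((n : ℝ) + 1) := by
        intro n
        rw [integral_mul_const]
      have hrw2 : (∫ y, lam * y ^ 2 ∂μW) = lam * ∫ y, y ^ 2 ∂μW := integral_const_mul _ _
      rw [hrw2] at hdc
      exact hdc.congr hrw1
    -- find b0 > 0 with g b0 > b0
    have hev : ∃ n : ℕ, 1 < g (1 / ((n : ℝ) + 1)) * ((n : ℝ) + 1) :=
      (hglim.eventually (eventually_gt_nhds h1)).exists
    obtain ⟨n0, hn0⟩ := hev
    set b0 : ℝ := 1 / ((n0 : ℝ) + 1) with hb0_def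
    have hb0pos : 0 < b0 := by rw [hb0_def]; positivity
    have hgb0 : b0 < g b0 := by
      have hp : (0 : ℝ) < (n0 : ℝ) + 1 := by positivity
      rw [hb0_def, div_lt_iff₀ hp]
      simpa [hb0_def] using hn0
    -- upper endpoint
    set M : ℝ := m + 1 with hM_def
    have hm0 : 0 ≤ m := by
      rw [hm_def]; exact integral_nonneg fun y => abs_nonneg y
    have hb0M : b0 ≤ M := by
      have hle1 : b0 ≤ 1 := by
        rw [hb0_def, div_le_one (by positivity)]
        have : (0:ℝ) ≤ (n0 : ℝ) := Nat.cast_nonneg n0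
        linarith
      rw [hM_def]; linarith
    -- continuity of g on positive reals
    have hgcont : ∀ b : ℝ, 0 < b → ContinuousAt g b := by
      intro b hb
      have hc := MeasureTheory.continuousAt_of_dominated (μ := μW)
        (F := fun (b' : ℝ) (y : ℝ) => y * (1 - Real.exp (-(y * lam * b'))))
        (x₀ := b) (bound := fun y => |y|)
        (Filter.Eventually.of_forall fun b' => hmeas b')
        ?_ hy_int.abs ?_
      · exact hc
      · filter_upwards [eventually_gt_nhds hb] with b' hb'
        exact hbound b' hb'.le
      · filter_upwards with y
        exact (Continuous.continuousAt (by fun_prop))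
    have hcontOn : ContinuousOn (fun b => g b - b) (Set.Icc b0 M) := by
      intro b hb
      exact ((hgcont b (lt_of_lt_of_le hb0pos hb.1)).sub continuousAt_id).continuousWithinAt
    have hM_val : g M - M ≤ 0 := by
      have := hgle M (by rw [hM_def]; linarith)
      rw [hM_def]; linarith
    have hb0_val : 0 ≤ g b0 - b0 := by linarith
    obtain ⟨Bs, hBs_mem, hBs_eq⟩ :=
      intermediate_value_Icc' hb0M hcontOn ⟨hM_val, hb0_val⟩
    have hBspos : 0 < Bs := lt_of_lt_of_le hb0pos hBs_mem.1
    have hBsfix : g Bs = Bs := by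
      have : g Bs - Bs = 0 := hBs_eq
      linarith
    -- the explicit fixed-point function
    set F : ℝ → ℝ := fun x => 1 - Real.exp (-(x * lam * Bs)) with hF_def
    have hF_int_eq : (∫ y, y * F y ∂μW) = Bs := by
      rw [← hBsfix]
    have hFfix : ∀ x : ℝ, 0 ≤ x →
        F x = 1 - Real.exp (-(x * lam * ∫ y, y * F y ∂μW)) := by
      intro x hx
      rw [hF_int_eq]
    have hFleβ := hβmax F hFfix
    have hF_nonneg : ∀ᵐ y ∂μW, 0 ≤ F y := by
      filter_upwards [haey] with y hy
      exact one_sub_exp_neg_nonneg _ (by positivity)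
    have hF_int : Integrable F μW := by
      refine Integrable.mono' (integrable_const (1 : ℝ))
        (Continuous.aestronglyMeasurable (by fun_prop)) ?_
      filter_upwards [haey] with y hy
      rw [Real.norm_eq_abs, abs_le]
      constructor
      · have := one_sub_exp_neg_nonneg (y * lam * Bs) (by positivity)
        simp only [hF_def]; linarith
      · simp only [hF_def]
        exact one_sub_exp_neg_le_one _
    have hFpos : 0 < ∫ y, F y ∂μW := by
      rw [integral_pos_iff_support_of_nonneg_ae hF_nonneg hF_int]
      refine lt_of_lt_of_le hμpos (measure_mono ?_)
      intro y hy
      simp only [Set.mem_setOf_eq] at hy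
      simp only [Function.mem_support, hF_def]
      have hlt : Real.exp (-(y * lam * Bs)) < 1 := by
        rw [Real.exp_lt_one_iff]
        have : 0 < y * lam * Bs := by positivity
        linarith
      intro hzero
      linarith
    calc (0 : ℝ) < ∫ y, F y ∂μW := hFpos
      _ ≤ ∫ y, β y ∂μW := by
          refine integral_mono_ae hF_int hβint ?_
          filter_upwards [haey] with y hy using hFleβ y hy
end

section
/- Let N be odd, c > 0, p_r = c/(Nr), and let N_r = 4r for 1 ≤ r ≤ ⌊N/2⌋ and N_r = 4(N−r) for ⌊N/2⌋ < r ≤ N. Then λ_N := Σ_{r=1}^{N} (−N_r·log(1 − p_r)) satisfies λ_N = 4c·log 2 − 2c/N + o(1/N) as N → ∞; that is, N·(λ_N − 4c·log 2) → −2c. -/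
open Filter

/-- For odd `N`, the number of vertices at distance `r` from a fixed vertex of the
discrete torus `(ℤ/Nℤ)²`: `N_r = 4r` for `1 ≤ r ≤ ⌊N/2⌋` and `N_r = 4(N-r)` for
`⌊N/2⌋ < r ≤ N`. -/
def Nr (N r : ℕ) : ℕ := if r ≤ N / 2 then 4 * r else 4 * (N - r)

namespace LambdaNAux

open Real Finset intervalIntegral

private lemma integral_linear (p q a b : ℝ) :
    ∫ x in a..b, (p - q * x) = p * (b - a) - q * ((b^2 - a^2)/2) := by
  rw [intervalIntegral.integral_sub intervalIntegrable_const
    (intervalIntegrable_id.const_mul q)]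
  rw [intervalIntegral.integral_const, intervalIntegral.integral_const_mul, integral_id]
  simp [smul_eq_mul, mul_comm]

private lemma log_succ_div_le (a : ℝ) (ha : 0 < a) :
    Real.log ((a+1)/a) ≤ (2*a+1)/(2*a*(a+1)) := by
  have ha1 : (0:ℝ) < a + 1 := by linarith
  have hmem : (0:ℝ) ∉ Set.uIcc a (a+1) := by
    rw [Set.uIcc_of_le (by linarith)]
    intro h; exact absurd h.1 (by linarith)
  have hlog : Real.log ((a+1)/a) = ∫ x in a..(a+1), 1/x := (integral_one_div hmem).symm
  have hint1 : IntervalIntegrable (fun x:ℝ => 1/x) MeasureTheory.volume a (a+1) := by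
    apply intervalIntegrable_one_div
    · intro x hx; rw [Set.uIcc_of_le (by linarith)] at hx; intro h; rw [h] at hx; linarith [hx.1]
    · exact continuousOn_id
  have hint2 : IntervalIntegrable (fun x:ℝ => (2*a+1)/(a*(a+1)) - (1/(a*(a+1))) * x)
      MeasureTheory.volume a (a+1) :=
    intervalIntegrable_const.sub (intervalIntegrable_id.const_mul _)
  have hmono : ∫ x in a..(a+1), 1/x ≤
      ∫ x in a..(a+1), ((2*a+1)/(a*(a+1)) - (1/(a*(a+1))) * x) := by
    apply intervalIntegral.integral_mono_on (by linarith) hint1 hint2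
    intro x hx
    obtain ⟨hx1, hx2⟩ := hx
    have hx0 : 0 < x := by linarith
    have hkey : (2*a+1)/(a*(a+1)) - (1/(a*(a+1))) * x - 1/x
        = (x - a) * ((a+1) - x) / (a*(a+1)*x) := by
      field_simp; ring
    have h2 : 0 ≤ (x - a) * ((a+1) - x) / (a*(a+1)*x) := by
      apply div_nonneg (mul_nonneg (by linarith) (by linarith)) (by positivity)
    linarith [hkey ▸ h2]
  rw [hlog]
  calc _ ≤ _ := hmono
    _ = (2*a+1)/(2*a*(a+1)) := by
        rw [integral_linear]; field_simp; ring

private lemma le_log_succ_div (a : ℝ) (ha : 0 < a) :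
    2/(2*a+1) ≤ Real.log ((a+1)/a) := by
  have ha1 : (0:ℝ) < a + 1 := by linarith
  have hc : (0:ℝ) < a + 1/2 := by linarith
  have hmem : (0:ℝ) ∉ Set.uIcc a (a+1) := by
    rw [Set.uIcc_of_le (by linarith)]
    intro h; exact absurd h.1 (by linarith)
  have hlog : Real.log ((a+1)/a) = ∫ x in a..(a+1), 1/x := (integral_one_div hmem).symm
  have hint1 : IntervalIntegrable (fun x:ℝ => 1/x) MeasureTheory.volume a (a+1) := by
    apply intervalIntegrable_one_div
    · intro x hx; rw [Set.uIcc_of_le (by linarith)] at hx; intro h; rw [h] at hx; linarith [hx.1]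
    · exact continuousOn_id
  have hint2 : IntervalIntegrable (fun x:ℝ => (2*(a+1/2))/((a+1/2)^2) - (1/((a+1/2))^2) * x)
      MeasureTheory.volume a (a+1) :=
    intervalIntegrable_const.sub (intervalIntegrable_id.const_mul _)
  have hmono : (∫ x in a..(a+1), ((2*(a+1/2))/((a+1/2)^2) - (1/((a+1/2))^2) * x)) ≤
      ∫ x in a..(a+1), 1/x := by
    apply intervalIntegral.integral_mono_on (by linarith) hint2 hint1
    intro x hx
    obtain ⟨hx1, hx2⟩ := hx
    have hx0 : 0 < x := by linarith
    have hkey : 1/x - ((2*(a+1/2))/((a+1/2)^2) - (1/((a+1/2))^2) * x)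
        = (x - (a+1/2))^2 / ((a+1/2)^2 * x) := by
      field_simp; ring
    have h2 : 0 ≤ (x - (a+1/2))^2 / ((a+1/2)^2 * x) := by positivity
    linarith [hkey ▸ h2]
  rw [hlog]
  refine le_trans (le_of_eq ?_) hmono
  rw [integral_linear]; field_simp; ring

private lemma log_diff_le (a : ℝ) (ha : 0 < a) :
    Real.log (a+1) - Real.log a ≤ 1/(a+1) + (1/(2*a) - 1/(2*(a+1))) := by
  have h := log_succ_div_le a ha
  rw [Real.log_div (by linarith) (ne_of_gt ha)] at h
  have : (2*a+1)/(2*a*(a+1)) = 1/(a+1) + (1/(2*a) - 1/(2*(a+1))) := by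
    field_simp; ring
  linarith [this ▸ h]

private lemma le_log_diff (a m : ℝ) (hm : 1 ≤ m) (ha : m ≤ a) :
    1/(a+1) + (1/(2*a) - 1/(2*(a+1))) - 1/(4*m^3) ≤ Real.log (a+1) - Real.log a := by
  have ha0 : 0 < a := by linarith
  have h := le_log_succ_div a ha0
  rw [Real.log_div (by linarith) (ne_of_gt ha0)] at h
  have key : 1/(a+1) + (1/(2*a) - 1/(2*(a+1))) - 2/(2*a+1)
      = 1/(2*a*(a+1)*(2*a+1)) := by field_simp; ring
  have hprod : (2*m)*(m*(2*m)) ≤ (2*a)*((a+1)*(2*a+1)) := by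
    apply mul_le_mul (by linarith) ?_ (by nlinarith) (by linarith)
    apply mul_le_mul (by linarith) (by linarith) (by linarith) (by linarith)
  have h2 : 1/(2*a*(a+1)*(2*a+1)) ≤ 1/(4*m^3) := by
    apply div_le_div_of_nonneg_left (by norm_num) (by positivity)
    nlinarith
  linarith

private lemma telescope_log (m : ℕ) (hm : 1 ≤ m) :
    ∑ i ∈ range m, (Real.log ((m:ℝ)+i+1) - Real.log ((m:ℝ)+i)) = Real.log 2 := by
  have hm0 : (0:ℝ) < m := by exact_mod_cast hm
  have tel := Finset.sum_range_sub (fun i : ℕ => Real.log ((m:ℝ)+i)) m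
  simp only [Nat.cast_add, Nat.cast_one, Nat.cast_zero, add_zero] at tel
  calc ∑ i ∈ range m, (Real.log ((m:ℝ)+i+1) - Real.log ((m:ℝ)+i))
      = ∑ i ∈ range m, (Real.log ((m:ℝ)+(i+1)) - Real.log ((m:ℝ)+i)) := by
        apply Finset.sum_congr rfl; intro i _; ring_nf
    _ = Real.log ((m:ℝ)+m) - Real.log m := tel
    _ = Real.log 2 := by
        rw [show (m:ℝ)+m = 2*m by ring, Real.log_mul (by norm_num) (ne_of_gt hm0)]; ring

private lemma telescope_half (m : ℕ) (hm : 1 ≤ m) :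
    ∑ i ∈ range m, (1/(2*((m:ℝ)+i)) - 1/(2*((m:ℝ)+i+1))) = 1/(4*(m:ℝ)) := by
  have hm0 : (0:ℝ) < m := by exact_mod_cast hm
  have tel := Finset.sum_range_sub' (fun i : ℕ => 1/(2*((m:ℝ)+i))) m
  simp only [Nat.cast_add, Nat.cast_one, Nat.cast_zero, add_zero] at tel
  calc ∑ i ∈ range m, (1/(2*((m:ℝ)+i)) - 1/(2*((m:ℝ)+i+1)))
      = ∑ i ∈ range m, (1/(2*((m:ℝ)+i)) - 1/(2*((m:ℝ)+(i+1)))) := by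
        apply Finset.sum_congr rfl; intro i _; ring_nf
    _ = 1/(2*(m:ℝ)) - 1/(2*((m:ℝ)+m)) := tel
    _ = 1/(4*(m:ℝ)) := by field_simp; ring

private lemma key_sum_bounds (m : ℕ) (hm : 1 ≤ m) :
    Real.log 2 - 1/(4*(m:ℝ)) ≤ (∑ i ∈ range m, (1:ℝ)/((m:ℝ)+i+1)) ∧
    (∑ i ∈ range m, (1:ℝ)/((m:ℝ)+i+1)) ≤ Real.log 2 - 1/(4*(m:ℝ)) + 1/(4*(m:ℝ)^2) := by
  have hm0 : (0:ℝ) < m := by exact_mod_cast hm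
  have hm1 : (1:ℝ) ≤ m := by exact_mod_cast hm
  have hpos : ∀ i ∈ range m, (0:ℝ) < (m:ℝ)+i := fun i _ => by positivity
  constructor
  · -- log 2 ≤ S + 1/(4m) : from log_diff_le summed
    have h1 : ∑ i ∈ range m, (Real.log ((m:ℝ)+i+1) - Real.log ((m:ℝ)+i))
        ≤ ∑ i ∈ range m, ((1:ℝ)/((m:ℝ)+i+1) + (1/(2*((m:ℝ)+i)) - 1/(2*((m:ℝ)+i+1)))) := by
      apply Finset.sum_le_sum
      intro i hi
      exact log_diff_le ((m:ℝ)+i) (hpos i hi)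
    rw [telescope_log m hm, Finset.sum_add_distrib, telescope_half m hm] at h1
    linarith
  · -- S + 1/(4m) - 1/(4m²) ≤ log 2 : from le_log_diff summed
    have h1 : ∑ i ∈ range m, ((1:ℝ)/((m:ℝ)+i+1) + (1/(2*((m:ℝ)+i)) - 1/(2*((m:ℝ)+i+1))) - 1/(4*(m:ℝ)^3))
        ≤ ∑ i ∈ range m, (Real.log ((m:ℝ)+i+1) - Real.log ((m:ℝ)+i)) := by
      apply Finset.sum_le_sum
      intro i hi
      exact le_log_diff ((m:ℝ)+i) m hm1 (le_add_of_nonneg_right (by positivity))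
    rw [telescope_log m hm, Finset.sum_sub_distrib, Finset.sum_add_distrib,
      telescope_half m hm, Finset.sum_const, Finset.card_range] at h1
    have : (m:ℝ) * (1/(4*(m:ℝ)^3)) = 1/(4*(m:ℝ)^2) := by field_simp
    rw [nsmul_eq_mul, this] at h1
    linarith

private lemma harmonic_le (N : ℕ) : ∑ r ∈ Icc 1 N, (1:ℝ)/r ≤ 1 + Real.log N := by
  induction N with
  | zero => simp
  | succ n ih =>
    rcases Nat.eq_zero_or_pos n with hn | hn
    · subst hn; norm_num
    · rw [Finset.sum_Icc_succ_top (by omega)]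
      have hn0 : (0:ℝ) < n := by exact_mod_cast hn
      have h1 : (1:ℝ)/(n+1) ≤ Real.log (n+1) - Real.log n := by
        have h := le_log_succ_div (n:ℝ) hn0
        rw [Real.log_div (by linarith) (ne_of_gt hn0)] at h
        have h2 : (1:ℝ)/(n+1) ≤ 2/(2*n+1) := by
          rw [div_le_div_iff₀ (by linarith) (by linarith)]
          linarith
        linarith
      push_cast
      linarith

private lemma neg_log_le (x : ℝ) (h0 : 0 ≤ x) (h1 : x ≤ 1/2) :
    -Real.log (1-x) ≤ x + 2*x^2 := by
  have hx : (0:ℝ) < 1 - x := by linarith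
  have h := Real.log_le_sub_one_of_pos (x := (1-x)⁻¹) (by positivity)
  rw [Real.log_inv] at h
  have h2 : (1-x)⁻¹ - 1 = x/(1-x) := by field_simp; ring
  have h3 : x/(1-x) ≤ x + 2*x^2 := by
    rw [div_le_iff₀ hx]; nlinarith
  linarith [h2 ▸ h]

private lemma le_neg_log (x : ℝ) (h0 : 0 ≤ x) (h1 : x < 1) :
    x ≤ -Real.log (1-x) := by
  have hx : (0:ℝ) < 1 - x := by linarith
  have h : Real.log (1-x) ≤ -x := by
    rw [Real.log_le_iff_le_exp hx]
    linarith [Real.add_one_le_exp (-x)]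
  linarith

private lemma Asum_eq (c : ℝ) (m : ℕ) (hm : 1 ≤ m) :
    ∑ r ∈ Icc 1 (2*m+1), (Nr (2*m+1) r : ℝ) * (c/((2*m+1:ℕ) * (r:ℕ)))
      = 4*c*(∑ i ∈ range m, (1:ℝ)/((m:ℝ)+i+1)) := by
  set N : ℕ := 2*m+1 with hN
  have hNdiv : N / 2 = m := by omega
  have hN0 : (0:ℝ) < (N:ℕ) := by positivity
  have hsplit : ∑ r ∈ Ioc 0 m, ((Nr N r : ℝ) * (c/((N:ℕ) * (r:ℕ))))
      + ∑ r ∈ Ioc m N, ((Nr N r : ℝ) * (c/((N:ℕ) * (r:ℕ))))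
      = ∑ r ∈ Icc 1 N, ((Nr N r : ℝ) * (c/((N:ℕ) * (r:ℕ)))) := by
    have h1 : Icc 1 N = Ioc 0 N := by ext x; simp; omega
    rw [h1]
    exact Finset.sum_Ioc_consecutive _ (by omega) (by omega)
  rw [← hsplit]
  -- part 1
  have hpart1 : ∑ r ∈ Ioc 0 m, ((Nr N r : ℝ) * (c/((N:ℕ) * (r:ℕ))))
      = m * (4*c/(N:ℕ)) := by
    rw [Finset.sum_congr rfl (fun r hr => ?_), Finset.sum_const, Nat.card_Ioc, Nat.sub_zero,
      nsmul_eq_mul]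
    simp only [Finset.mem_Ioc] at hr
    have hrle : r ≤ N / 2 := by omega
    have hr0 : (0:ℝ) < (r:ℕ) := by exact_mod_cast hr.1
    rw [Nr, if_pos hrle]
    push_cast
    field_simp
  -- part 2
  have hpart2 : ∑ r ∈ Ioc m N, ((Nr N r : ℝ) * (c/((N:ℕ) * (r:ℕ))))
      = 4*c*((∑ i ∈ range m, (1:ℝ)/((m:ℝ)+i+1)) + 1/(N:ℕ)) - (m+1) * (4*c/(N:ℕ)) := by
    have hIoc : Ioc m N = Ico (m+1) (N+1) := by ext x; simp
    rw [hIoc, Finset.sum_Ico_eq_sum_range]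
    have hcard : N + 1 - (m+1) = m + 1 := by omega
    rw [hcard]
    have hterm : ∀ i ∈ range (m+1), ((Nr N (m+1+i) : ℝ) * (c/((N:ℕ) * ((m+1+i:ℕ):ℝ))))
        = 4*c*(1/((m:ℝ)+1+i)) - 4*c/(N:ℕ) := by
      intro i hi
      simp only [Finset.mem_range] at hi
      have hicast : ((N - (m+1+i) : ℕ) : ℝ) = (N:ℝ) - ((m:ℝ)+1+i) := by
        have : m+1+i ≤ N := by omega
        push_cast [Nat.cast_sub this]
        ring
      have hgt : ¬ (m+1+i ≤ N / 2) := by omega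
      rw [Nr, if_neg hgt]
      push_cast [hicast]
      have h1 : ((m:ℝ)+1+i) > 0 := by positivity
      have hNr : (N:ℝ) = 2*(m:ℝ)+1 := by rw [hN]; push_cast; ring
      rw [hNr] at *
      field_simp
    rw [Finset.sum_congr rfl hterm, Finset.sum_sub_distrib, Finset.sum_const, Finset.card_range,
      ← Finset.mul_sum, Finset.sum_range_succ, nsmul_eq_mul]
    have hlast : (1:ℝ)/((m:ℝ)+1+m) = 1/(N:ℕ) := by
      congr 1
      rw [hN]; push_cast; ring
    have hre : ∑ i ∈ range m, (1:ℝ)/((m:ℝ)+1+i) = ∑ i ∈ range m, (1:ℝ)/((m:ℝ)+i+1) := by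
      apply Finset.sum_congr rfl; intro i _; ring_nf
    rw [hlast, hre]
    push_cast
    ring
  rw [hpart1, hpart2]
  push_cast
  ring

private lemma Nr_le (m r : ℕ) : (Nr (2*m+1) r) ≤ 4 * r := by
  rw [Nr]; split <;> omega

private lemma lam_bounds (c : ℝ) (hc : 0 < c) (m : ℕ) (hm : 1 ≤ m)
    (hcN : 2*c ≤ ((2*m+1:ℕ):ℝ)) :
    (∑ r ∈ Icc 1 (2*m+1), (Nr (2*m+1) r : ℝ) * (c/((2*m+1:ℕ) * (r:ℕ)))) ≤
      (∑ r ∈ Icc 1 (2*m+1), -((Nr (2*m+1) r : ℝ) * Real.log (1 - c/(((2*m+1:ℕ):ℝ) * (r:ℕ))))) ∧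
    (∑ r ∈ Icc 1 (2*m+1), -((Nr (2*m+1) r : ℝ) * Real.log (1 - c/(((2*m+1:ℕ):ℝ) * (r:ℕ))))) ≤
      (∑ r ∈ Icc 1 (2*m+1), (Nr (2*m+1) r : ℝ) * (c/((2*m+1:ℕ) * (r:ℕ))))
        + 8*c^2*(1+Real.log (2*m+1:ℕ))/((2*m+1:ℕ):ℝ)^2 := by
  set N : ℕ := 2*m+1 with hNdef
  have hN0 : (0:ℝ) < (N:ℕ) := by positivity
  have hx : ∀ r ∈ Icc 1 N, 0 < c/((N:ℝ)*(r:ℕ)) ∧ c/((N:ℝ)*(r:ℕ)) ≤ 1/2 := by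
    intro r hr
    simp only [Finset.mem_Icc] at hr
    have hr0 : (0:ℝ) < (r:ℕ) := by exact_mod_cast hr.1
    have hr1 : (1:ℝ) ≤ (r:ℕ) := by exact_mod_cast hr.1
    constructor
    · positivity
    · rw [div_le_iff₀ (by positivity)]
      nlinarith
  constructor
  · apply Finset.sum_le_sum
    intro r hr
    obtain ⟨h0, h1⟩ := hx r hr
    have := le_neg_log _ h0.le (by linarith)
    rw [← neg_mul]
    have hNr0 : (0:ℝ) ≤ (Nr N r : ℝ) := by positivity
    calc (Nr N r : ℝ) * (c/((N:ℕ) * (r:ℕ))) ≤ (Nr N r : ℝ) * (-Real.log (1 - c/((N:ℝ)*(r:ℕ)))) :=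
          mul_le_mul_of_nonneg_left this hNr0
      _ = -(Nr N r : ℝ) * Real.log (1 - c/((N:ℝ)*(r:ℕ))) := by ring
  · have step : ∀ r ∈ Icc 1 N, -((Nr N r : ℝ) * Real.log (1 - c/((N:ℝ)*(r:ℕ))))
        ≤ (Nr N r : ℝ) * (c/((N:ℕ) * (r:ℕ))) + 8*c^2/((N:ℝ)^2) * (1/(r:ℕ)) := by
      intro r hr
      obtain ⟨h0, h1⟩ := hx r hr
      simp only [Finset.mem_Icc] at hr
      have hr0 : (0:ℝ) < (r:ℕ) := by exact_mod_cast hr.1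
      have hNr0 : (0:ℝ) ≤ (Nr N r : ℝ) := by positivity
      have hNrle : (Nr N r : ℝ) ≤ 4*(r:ℕ) := by exact_mod_cast Nr_le m r
      have hb := neg_log_le _ h0.le h1
      have h2 : -((Nr N r : ℝ) * Real.log (1 - c/((N:ℝ)*(r:ℕ))))
          ≤ (Nr N r : ℝ) * (c/((N:ℝ)*(r:ℕ)) + 2*(c/((N:ℝ)*(r:ℕ)))^2) := by
        calc -((Nr N r : ℝ) * Real.log (1 - c/((N:ℝ)*(r:ℕ))))
            = (Nr N r : ℝ) * (-Real.log (1 - c/((N:ℝ)*(r:ℕ)))) := by ring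
          _ ≤ _ := mul_le_mul_of_nonneg_left hb hNr0
      have h3 : (Nr N r : ℝ) * (2*(c/((N:ℝ)*(r:ℕ)))^2) ≤ 8*c^2/((N:ℝ)^2) * (1/(r:ℕ)) := by
        have : (Nr N r : ℝ) * (2*(c/((N:ℝ)*(r:ℕ)))^2) ≤ (4*(r:ℕ)) * (2*(c/((N:ℝ)*(r:ℕ)))^2) :=
          mul_le_mul_of_nonneg_right hNrle (by positivity)
        calc (Nr N r : ℝ) * (2*(c/((N:ℝ)*(r:ℕ)))^2) ≤ (4*(r:ℕ)) * (2*(c/((N:ℝ)*(r:ℕ)))^2) := this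
          _ = 8*c^2/((N:ℝ)^2) * (1/(r:ℕ)) := by field_simp; ring
      nlinarith [h2, h3]
    calc _ ≤ ∑ r ∈ Icc 1 N, ((Nr N r : ℝ) * (c/((N:ℕ) * (r:ℕ))) + 8*c^2/((N:ℝ)^2) * (1/(r:ℕ))) :=
            Finset.sum_le_sum step
      _ = (∑ r ∈ Icc 1 N, (Nr N r : ℝ) * (c/((N:ℕ) * (r:ℕ))))
            + 8*c^2/((N:ℝ)^2) * ∑ r ∈ Icc 1 N, (1:ℝ)/(r:ℕ) := by
          rw [Finset.sum_add_distrib, Finset.mul_sum]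
      _ ≤ _ := by
          have hh := harmonic_le N
          have : 8*c^2/((N:ℝ)^2) * ∑ r ∈ Icc 1 N, (1:ℝ)/(r:ℕ)
              ≤ 8*c^2/((N:ℝ)^2) * (1 + Real.log N) := by
            apply mul_le_mul_of_nonneg_left hh (by positivity)
          have heq : 8*c^2/((N:ℝ)^2) * (1 + Real.log N) = 8*c^2*(1+Real.log N)/((N:ℝ)^2) := by ring
          linarith

end LambdaNAux

set_option maxHeartbeats 1000000 in
open LambdaNAux Finset in
/-- Let `p_r = c/(Nr)` and
`λ_N = Σ_{r=1}^N (-N_r log(1 - p_r))`. Then, as `N → ∞` through odd values,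
`λ_N = 4c log 2 - 2c/N + o(1/N)`, i.e. `N (λ_N - 4c log 2) → -2c`. -/
theorem lambdaN_asymptotics (c : ℝ) (hc : 0 < c) :
    Tendsto (fun N : ℕ =>
        (N : ℝ) * ((∑ r ∈ Finset.Icc 1 N,
            -((Nr N r : ℝ) * Real.log (1 - c / ((N : ℝ) * (r : ℝ))))) -
          4 * c * Real.log 2))
      (atTop ⊓ Filter.principal {N | Odd N}) (nhds (-(2 * c))) := by
  have hE0 : Tendsto (fun N : ℕ => (20*c+8*c^2)/(N:ℝ) + 8*c^2*(Real.log N/(N:ℝ)))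
      atTop (nhds 0) := by
    have h1 : Tendsto (fun N:ℕ => (20*c+8*c^2)/(N:ℝ)) atTop (nhds 0) :=
      tendsto_const_nhds.div_atTop tendsto_natCast_atTop_atTop
    have h2 : Tendsto (fun x:ℝ => Real.log x / x) atTop (nhds 0) :=
      Real.isLittleO_log_id_atTop.tendsto_div_nhds_zero
    have h3 : Tendsto (fun N:ℕ => Real.log N/(N:ℝ)) atTop (nhds 0) :=
      h2.comp tendsto_natCast_atTop_atTop
    have := h1.add (h3.const_mul (8*c^2))
    simpa [mul_comm] using this
  have hEF : Tendsto (fun N : ℕ => (20*c+8*c^2)/(N:ℝ) + 8*c^2*(Real.log N/(N:ℝ)))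
      (atTop ⊓ Filter.principal {N | Odd N}) (nhds 0) :=
    hE0.mono_left inf_le_left
  have hlo : Tendsto (fun N : ℕ => -(2*c) - ((20*c+8*c^2)/(N:ℝ) + 8*c^2*(Real.log N/(N:ℝ))))
      (atTop ⊓ Filter.principal {N | Odd N}) (nhds (-(2*c))) := by
    have := tendsto_const_nhds (f := atTop ⊓ Filter.principal {N : ℕ | Odd N})
      (x := -(2*c)) |>.sub hEF
    simpa using this
  have hhi : Tendsto (fun N : ℕ => -(2*c) + ((20*c+8*c^2)/(N:ℝ) + 8*c^2*(Real.log N/(N:ℝ))))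
      (atTop ⊓ Filter.principal {N | Odd N}) (nhds (-(2*c))) := by
    have := tendsto_const_nhds (f := atTop ⊓ Filter.principal {N : ℕ | Odd N})
      (x := -(2*c)) |>.add hEF
    simpa using this
  have hev : ∀ᶠ N : ℕ in atTop ⊓ Filter.principal {N | Odd N},
      (-(2*c) - ((20*c+8*c^2)/(N:ℝ) + 8*c^2*(Real.log N/(N:ℝ))) ≤ (N : ℝ) * ((∑ r ∈ Finset.Icc 1 N,
            -((Nr N r : ℝ) * Real.log (1 - c / ((N : ℝ) * (r : ℝ))))) - 4 * c * Real.log 2)) ∧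
      ((N : ℝ) * ((∑ r ∈ Finset.Icc 1 N,
            -((Nr N r : ℝ) * Real.log (1 - c / ((N : ℝ) * (r : ℝ))))) - 4 * c * Real.log 2)
          ≤ -(2*c) + ((20*c+8*c^2)/(N:ℝ) + 8*c^2*(Real.log N/(N:ℝ)))) := by
    rw [Filter.eventually_inf_principal]
    have hb : ∀ᶠ N : ℕ in atTop, (3:ℕ) ≤ N ∧ 2*c ≤ (N:ℝ) :=
      (eventually_ge_atTop 3).and (tendsto_natCast_atTop_atTop.eventually_ge_atTop (2*c))
    filter_upwards [hb] with N hN hodd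
    obtain ⟨hN3, hNc⟩ := hN
    obtain ⟨m, hm2⟩ := hodd
    have hNm : N = 2*m+1 := by omega
    subst hNm
    have hm : 1 ≤ m := by omega
    have hlam := lam_bounds c hc m hm hNc
    rw [Asum_eq c m hm] at hlam
    obtain ⟨hA, hB⟩ := hlam
    obtain ⟨hS1, hS2⟩ := key_sum_bounds m hm
    set mR : ℝ := (m:ℝ) with hmRdef
    set NR : ℝ := ((2*m+1:ℕ):ℝ) with hNRdef
    set S : ℝ := ∑ i ∈ range m, (1:ℝ)/(mR+i+1) with hSdef
    set lam : ℝ := ∑ r ∈ Finset.Icc 1 (2*m+1),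
        -((Nr (2*m+1) r : ℝ) * Real.log (1 - c / (NR * (r : ℝ)))) with hlamdef
    have hm1 : (1:ℝ) ≤ mR := by rw [hmRdef]; exact_mod_cast hm
    have hm0 : (0:ℝ) < mR := by linarith
    have hNR : NR = 2*mR+1 := by rw [hNRdef, hmRdef]; push_cast; ring
    have hNR0 : (0:ℝ) < NR := by rw [hNR]; linarith
    have hlogN : 0 ≤ Real.log NR := Real.log_nonneg (by rw [hNR]; linarith)
    clear_value mR NR S lam
    constructor
    · have l1 : 4*c*(Real.log 2 - 1/(4*mR)) ≤ 4*c*S :=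
        mul_le_mul_of_nonneg_left hS1 (by linarith)
      have l2 : 4*c*(Real.log 2 - 1/(4*mR)) = 4*c*Real.log 2 - c/mR := by
        field_simp
      have l3 : -(c/mR) ≤ lam - 4*c*Real.log 2 := by
        rw [l2] at l1; linarith
      have l4 : NR * (-(c/mR)) ≤ NR * (lam - 4*c*Real.log 2) :=
        mul_le_mul_of_nonneg_left l3 (by linarith)
      have l5 : NR * (-(c/mR)) = -(2*c) - c/mR := by
        rw [hNR]; field_simp; ring
      have l6 : c/mR ≤ 3*c/NR := by
        rw [hNR, div_le_div_iff₀ hm0 (by linarith)]; nlinarith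
      have l7 : 3*c/NR ≤ (20*c+8*c^2)/NR + 8*c^2*(Real.log NR/NR) := by
        have h8 : 3*c/NR ≤ (20*c+8*c^2)/NR := by
          rw [div_le_div_iff₀ hNR0 hNR0]; nlinarith
        have h9 : 0 ≤ 8*c^2*(Real.log NR/NR) := by positivity
        linarith
      linarith
    · have u1 : 4*c*S ≤ 4*c*(Real.log 2 - 1/(4*mR) + 1/(4*mR^2)) :=
        mul_le_mul_of_nonneg_left hS2 (by linarith)
      have u2 : 4*c*(Real.log 2 - 1/(4*mR) + 1/(4*mR^2))
          = 4*c*Real.log 2 - c/mR + c/mR^2 := by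
        field_simp
      have u3 : lam - 4*c*Real.log 2
          ≤ -(c/mR) + c/mR^2 + 8*c^2*(1+Real.log NR)/NR^2 := by
        rw [u2] at u1; linarith
      have u4 : NR * (lam - 4*c*Real.log 2)
          ≤ NR * (-(c/mR) + c/mR^2 + 8*c^2*(1+Real.log NR)/NR^2) :=
        mul_le_mul_of_nonneg_left u3 (by linarith)
      have u5 : NR * (-(c/mR) + c/mR^2 + 8*c^2*(1+Real.log NR)/NR^2)
          = -(2*c) - c/mR + (c*NR/mR^2)
            + (8*c^2/NR + 8*c^2*(Real.log NR/NR)) := by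
        rw [hNR]; field_simp; ring
      have u6 : c*NR/mR^2 ≤ 9*c/NR := by
        rw [hNR, div_le_div_iff₀ (by positivity) (by linarith)]
        nlinarith [mul_nonneg (mul_nonneg hc.le (by linarith : (0:ℝ) ≤ 5*mR+1))
          (by linarith : (0:ℝ) ≤ mR-1)]
      have u7 : 0 ≤ c/mR := by positivity
      have u8 : 9*c/NR + 8*c^2/NR ≤ (20*c+8*c^2)/NR := by
        rw [← add_div, div_le_div_iff₀ hNR0 hNR0]; nlinarith
      linarith
  exact tendsto_of_tendsto_of_tendsto_of_le_of_le' hlo hhi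
    (hev.mono fun N h => h.1) (hev.mono fun N h => h.2)
end

section
/- Assume E[W²] < ∞. Then the expected number of edges e(G_{N,W}) of the random graph G_{N,W} satisfies (1/N²)·E[e(G_{N,W})] → (λ/2)·(E[W])² as N → ∞, where λ = 4c·log 2. -/
open MeasureTheory Filter

noncomputable section

/-- `d_N(i) = i` if `i ≤ N/2`, `N - i` otherwise. -/
def dN (N i : ℕ) : ℕ := if i ≤ N / 2 then i else N - i

/-- The graph distance on the discrete torus `(ℤ/Nℤ)²`. -/
def torusDist (N : ℕ) (u v : Fin N × Fin N) : ℕ :=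
  dN N ((u.1.val : ℤ) - (v.1.val : ℤ)).natAbs + dN N ((u.2.val : ℤ) - (v.2.val : ℤ)).natAbs

lemma natAbs_sub_comm' (a b : ℤ) : (a - b).natAbs = (b - a).natAbs := by omega

lemma torusDist_comm (N : ℕ) (u v : Fin N × Fin N) : torusDist N u v = torusDist N v u := by
  unfold torusDist
  rw [natAbs_sub_comm' ((u.1.val : ℤ)) ((v.1.val : ℤ)),
    natAbs_sub_comm' ((u.2.val : ℤ)) ((v.2.val : ℤ))]

/-- The edge probability `min{c W_u W_v / (N d(u,v)), 1}` as a function on unordered pairs. -/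
def edgeProb (N : ℕ) (c : ℝ) (w : Fin N × Fin N → ℝ) : Sym2 (Fin N × Fin N) → ℝ :=
  Sym2.lift ⟨fun u v => min (c * w u * w v / ((N : ℝ) * (torusDist N u v : ℝ))) 1, by
    intro u v
    dsimp only
    rw [torusDist_comm, mul_right_comm]⟩

/-- The random distance graph: given weights `w` and i.i.d. uniform variables `x` on the
unordered pairs, the pair `{u,v}` is an edge iff `x s(u,v) < edgeProb s(u,v)`; for uniform
`x` this happens with probability `min{c W_u W_v/(N d(u,v)), 1}`, independently over pairs. -/
def distGraph (N : ℕ) (c : ℝ) (w : Fin N × Fin N → ℝ)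
    (x : Sym2 (Fin N × Fin N) → ℝ) : SimpleGraph (Fin N × Fin N) where
  Adj u v := u ≠ v ∧ x s(u, v) < edgeProb N c w s(u, v)
  symm := by
    constructor
    intro u v h
    refine ⟨h.1.symm, ?_⟩
    rw [Sym2.eq_swap]
    exact h.2
  loopless := ⟨fun u h => h.1 rfl⟩

/-- The uniform distribution on `[0,1]`. -/
def unif01 : Measure ℝ := volume.restrict (Set.Icc 0 1)

/-- The measure governing the i.i.d. uniform variables attached to unordered pairs. -/
def edgeMeasure (N : ℕ) : Measure (Sym2 (Fin N × Fin N) → ℝ) :=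
  Measure.pi fun _ => unif01

/-- Size of the largest connected component of a graph on a finite vertex set. -/
def largestComponentSize {V : Type*} [Fintype V] (G : SimpleGraph V) : ℕ :=
  Finset.univ.sup fun v => Set.ncard {u | G.Reachable u v}

end

/-- The measure governing the random graph `G_{N,W}`: i.i.d. weights with law `μW` attached
to the vertices, together with i.i.d. uniform variables attached to the unordered pairs
(the pair `{u,v}` being an edge iff its uniform variable falls below
`min{c W_u W_v/(N d(u,v)), 1}`). -/
noncomputable def weightedMeasure (N : ℕ) (μW : Measure ℝ) :
    Measure ((Fin N × Fin N → ℝ) × (Sym2 (Fin N × Fin N) → ℝ)) :=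
  (Measure.pi fun _ => μW).prod (edgeMeasure N)

-- ===================== auxiliary development =====================
open Finset Topology Real


noncomputable section AuxDev

noncomputable def Hr (n : ℕ) : ℝ := ∑ i ∈ Finset.range n, 1/((i:ℝ)+1)

lemma Hr_eq (n : ℕ) : Hr n = (harmonic n : ℝ) := by
  unfold Hr harmonic
  push_cast
  simp [one_div]

lemma Hr_succ (n : ℕ) : Hr (n+1) = Hr n + 1/((n:ℝ)+1) := by
  unfold Hr
  rw [Finset.sum_range_succ]

lemma Hr_nonneg (n : ℕ) : 0 ≤ Hr n := by
  unfold Hr; positivity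

lemma Hr_mono : Monotone Hr := by
  intro a b hab
  unfold Hr
  exact Finset.sum_le_sum_of_subset_of_nonneg (Finset.range_subset_range.2 hab)
    (fun i _ _ => by positivity)

lemma sum_shift (M : ℕ) :
    ∑ a ∈ Finset.Icc 1 M, 1/((a:ℝ) + (M+1)) = Hr (2*M+1) - Hr (M+1) := by
  have h1 : Hr (2*M+1) - Hr (M+1) = ∑ i ∈ Finset.Ico (M+1) (2*M+1), 1/((i:ℝ)+1) := by
    rw [Finset.sum_Ico_eq_sub _ (by omega)]
    rfl
  rw [h1, Finset.sum_Ico_eq_sum_range]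
  have h2 : Finset.Icc 1 M = Finset.Ico 1 (M+1) := rfl
  rw [h2, Finset.sum_Ico_eq_sum_range]
  apply Finset.sum_congr (by congr 1; omega)
  intro i _
  push_cast
  ring_nf


noncomputable def SS (M : ℕ) : ℝ := ∑ a ∈ Finset.Icc 1 M, ∑ b ∈ Finset.Icc 1 M, 1/((a:ℝ)+b)



lemma SS_identity (M : ℕ) :
    SS M = (2*(M:ℝ)+1) * Hr (2*M) - 2*((M:ℝ)+1) * Hr M := by
  induction M with
  | zero => simp [SS, Hr]
  | succ M ih =>
    have hins : Finset.Icc 1 (M+1) = insert (M+1) (Finset.Icc 1 M) := by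
      ext x; simp; omega
    have hnot : (M+1) ∉ Finset.Icc 1 M := by simp
    have hshift' : ∑ a ∈ Finset.Icc 1 M, 1/(((M:ℝ)+1) + a) = Hr (2*M+1) - Hr (M+1) := by
      rw [← sum_shift]
      exact Finset.sum_congr rfl (fun b _ => by ring_nf)
    have hshift'' : ∑ a ∈ Finset.Icc 1 M, 1/((a:ℝ) + ((M:ℝ)+1)) = Hr (2*M+1) - Hr (M+1) := by
      rw [← sum_shift]
    have hstep : SS (M+1) = SS M + 2 * (Hr (2*M+1) - Hr (M+1)) + 1/(2*(M:ℝ)+2) := by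
      unfold SS
      rw [hins, Finset.sum_insert hnot]
      have hrow : ∀ a : ℕ, ∑ b ∈ insert (M+1) (Finset.Icc 1 M), 1/((a:ℝ)+b)
          = 1/((a:ℝ)+((M:ℝ)+1)) + ∑ b ∈ Finset.Icc 1 M, 1/((a:ℝ)+b) := by
        intro a; rw [Finset.sum_insert hnot]; push_cast; ring_nf
      rw [Finset.sum_congr rfl (fun a (_ : a ∈ Finset.Icc 1 M) => hrow a),
        Finset.sum_add_distrib, hshift'', hrow]
      have : ∑ b ∈ Finset.Icc 1 M, 1/((↑(M+1):ℝ)+b) = Hr (2*M+1) - Hr (M+1) := by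
        rw [← hshift']; exact Finset.sum_congr rfl (fun b _ => by push_cast; ring_nf)
      rw [this]
      push_cast
      ring
    have hA : Hr (2*M+1+1) = Hr (2*M) + 1/(2*(M:ℝ)+1) + 1/(2*(M:ℝ)+2) := by
      rw [Hr_succ, Hr_succ]; push_cast; ring
    have hB : Hr (2*M+1) = Hr (2*M) + 1/(2*(M:ℝ)+1) := by
      rw [Hr_succ]; push_cast; ring
    have hC : Hr (M+1) = Hr M + 1/((M:ℝ)+1) := by
      rw [Hr_succ]
    have e1 : 2*(M+1) = (2*M+1)+1 := by ring
    rw [hstep, ih, e1, hA, hB, hC]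
    have h1 : (2*(M:ℝ)+1) ≠ 0 := by positivity
    have h2 : (2*(M:ℝ)+2) ≠ 0 := by positivity
    have h3 : ((M:ℝ)+1) ≠ 0 := by positivity
    push_cast
    field_simp
    ring


lemma tendsto_Hr_sub_log :
    Tendsto (fun n : ℕ => Hr n - Real.log ((n:ℝ)+1)) atTop (𝓝 Real.eulerMascheroniConstant) := by
  have := Real.tendsto_eulerMascheroniSeq
  unfold Real.eulerMascheroniSeq at this
  simpa [Hr_eq] using this

lemma tendsto_log_succ_div :
    Tendsto (fun n : ℕ => Real.log ((n:ℝ)+1) / n) atTop (𝓝 0) := by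
  have h1 : (fun n : ℕ => Real.log ((n:ℝ)+1)) =o[atTop] (fun n : ℕ => (n:ℝ)+1) := by
    exact Real.isLittleO_log_id_atTop.comp_tendsto
      (tendsto_atTop_add_const_right _ 1 tendsto_natCast_atTop_atTop)
  have h2 : (fun n : ℕ => (n:ℝ)+1) =O[atTop] (fun n : ℕ => (n:ℝ)) := by
    apply Asymptotics.IsBigO.of_bound 2
    filter_upwards [eventually_ge_atTop 1] with n hn
    have : (1:ℝ) ≤ (n:ℝ) := by exact_mod_cast hn
    simp only [Real.norm_eq_abs]
    rw [abs_of_nonneg (by linarith), abs_of_nonneg (by linarith)]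
    linarith
  exact (h1.trans_isBigO h2).tendsto_div_nhds_zero

lemma tendsto_Hr_div : Tendsto (fun n : ℕ => Hr n / n) atTop (𝓝 0) := by
  have h1 : Tendsto (fun n : ℕ => (Hr n - Real.log ((n:ℝ)+1)) * (n:ℝ)⁻¹) atTop (𝓝 0) := by
    simpa using tendsto_Hr_sub_log.mul tendsto_inv_atTop_nhds_zero_nat
  have := h1.add tendsto_log_succ_div
  rw [add_zero] at this
  apply this.congr
  intro n
  rw [div_eq_mul_inv, div_eq_mul_inv]
  ring

lemma tendsto_Hr2_sub_Hr :
    Tendsto (fun M : ℕ => Hr (2*M) - Hr M) atTop (𝓝 (Real.log 2)) := by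
  have hcomp : Tendsto (fun M : ℕ => Hr (2*M) - Real.log (((2*M:ℕ):ℝ)+1)) atTop
      (𝓝 Real.eulerMascheroniConstant) := by
    exact tendsto_Hr_sub_log.comp
      (tendsto_atTop_mono (fun M => (by omega : M ≤ 2*M)) tendsto_id)
  have hA : Tendsto (fun M : ℕ => Hr (2*M) - Real.log (2*(M:ℝ)+1)) atTop
      (𝓝 Real.eulerMascheroniConstant) := by
    apply hcomp.congr; intro M; push_cast; ring_nf
  have hlog : Tendsto (fun M : ℕ => Real.log (2*(M:ℝ)+1) - Real.log ((M:ℝ)+1)) atTop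
      (𝓝 (Real.log 2)) := by
    have hq : Tendsto (fun M : ℕ => (2*(M:ℝ)+1)/((M:ℝ)+1)) atTop (𝓝 2) := by
      have h0 : Tendsto (fun M : ℕ => 2 - 1/((M:ℝ)+1)) atTop (𝓝 2) := by
        simpa using (tendsto_const_nhds (x := (2:ℝ))).sub tendsto_one_div_add_atTop_nhds_zero_nat
      apply h0.congr
      intro M
      have : ((M:ℝ)+1) ≠ 0 := by positivity
      field_simp
      ring
    have := ((Real.continuousAt_log (by norm_num)).tendsto.comp hq)
    apply this.congr
    intro M
    simp only [Function.comp]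
    rw [Real.log_div (by positivity) (by positivity)]
  have := (hA.sub tendsto_Hr_sub_log).add hlog
  rw [sub_self, zero_add] at this
  apply this.congr
  intro M
  ring

lemma tendsto_SS_div : Tendsto (fun M : ℕ => SS M / M) atTop (𝓝 (2 * Real.log 2)) := by
  have hHr2 : Tendsto (fun M : ℕ => Hr (2*M) / ((2*M:ℕ):ℝ)) atTop (𝓝 0) :=
    tendsto_Hr_div.comp (tendsto_atTop_mono (fun M => (by omega : M ≤ 2*M)) tendsto_id)
  have hg : Tendsto (fun M : ℕ => 2*(Hr (2*M) - Hr M) + 2*(Hr (2*M) / ((2*M:ℕ):ℝ))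
      - 2*(Hr M / M)) atTop (𝓝 (2 * Real.log 2)) := by
    have := ((tendsto_Hr2_sub_Hr.const_mul 2).add (hHr2.const_mul 2)).sub
      (tendsto_Hr_div.const_mul 2)
    simpa using this
  apply hg.congr'
  filter_upwards [eventually_ge_atTop 1] with M hM
  have hM0 : ((M:ℝ)) ≠ 0 := by
    have : (1:ℝ) ≤ (M:ℝ) := by exact_mod_cast hM
    linarith
  rw [SS_identity]
  push_cast
  field_simp
  ring


def mN (N i : ℕ) : ℕ := min i (N - i)

noncomputable def ff (N : ℕ) (p : ℕ × ℕ) : ℝ :=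
  if p = (0,0) then 0 else 1/((mN N p.1 : ℝ) + (mN N p.2 : ℝ))

noncomputable def UU (N : ℕ) : ℝ := ∑ p ∈ (Finset.range N) ×ˢ (Finset.range N), ff N p

lemma ff_nonneg (N : ℕ) (p : ℕ × ℕ) : 0 ≤ ff N p := by
  unfold ff; split
  · exact le_refl 0
  · positivity

def BB (N : ℕ) : Finset ℕ := Finset.Icc 1 ((N-1)/2) ∪ Finset.Icc (N - (N-1)/2) (N-1)

lemma sum_BB (N : ℕ) (hN : 2 ≤ N) (g : ℕ → ℝ) :
    ∑ i ∈ BB N, g (mN N i) = 2 * ∑ a ∈ Finset.Icc 1 ((N-1)/2), g a := by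
  have hdisj : Disjoint (Finset.Icc 1 ((N-1)/2)) (Finset.Icc (N - (N-1)/2) (N-1)) := by
    rw [Finset.disjoint_left]
    intro i hi hi'
    simp only [Finset.mem_Icc] at hi hi'
    omega
  unfold BB
  rw [Finset.sum_union hdisj]
  have h1 : ∑ i ∈ Finset.Icc 1 ((N-1)/2), g (mN N i) = ∑ a ∈ Finset.Icc 1 ((N-1)/2), g a := by
    apply Finset.sum_congr rfl
    intro i hi
    simp only [Finset.mem_Icc] at hi
    congr 1
    unfold mN
    omega
  have h2 : ∑ i ∈ Finset.Icc (N - (N-1)/2) (N-1), g (mN N i)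
      = ∑ a ∈ Finset.Icc 1 ((N-1)/2), g a := by
    apply Finset.sum_nbij' (fun i => N - i) (fun a => N - a)
    · intro i hi; simp only [Finset.mem_Icc] at *; omega
    · intro a ha; simp only [Finset.mem_Icc] at *; omega
    · intro i hi; simp only [Finset.mem_Icc] at hi; omega
    · intro a ha; simp only [Finset.mem_Icc] at ha; omega
    · intro i hi
      simp only [Finset.mem_Icc] at hi
      congr 1
      unfold mN
      omega
  rw [h1, h2]; ring

lemma sum_BB_sq (N : ℕ) (hN : 2 ≤ N) :
    ∑ p ∈ (BB N) ×ˢ (BB N), ff N p = 4 * SS ((N-1)/2) := by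
  have hne : ∀ i ∈ BB N, i ≠ 0 := by
    intro i hi
    unfold BB at hi
    simp only [Finset.mem_union, Finset.mem_Icc] at hi
    omega
  rw [Finset.sum_product]
  have hrow : ∀ i ∈ BB N, ∑ j ∈ BB N, ff N (i, j)
      = 2 * ∑ b ∈ Finset.Icc 1 ((N-1)/2), 1/((mN N i : ℝ) + b) := by
    intro i hi
    rw [← sum_BB N hN (fun y => 1/((mN N i : ℝ) + y))]
    apply Finset.sum_congr rfl
    intro j hj
    unfold ff
    rw [if_neg (by simp [Prod.ext_iff, hne i hi])]
  rw [Finset.sum_congr rfl hrow, ← Finset.mul_sum]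
  rw [sum_BB N hN (fun y => ∑ b ∈ Finset.Icc 1 ((N-1)/2), 1/((y:ℝ) + b))]
  unfold SS
  ring

lemma UU_lower (N : ℕ) (hN : 2 ≤ N) : 4 * SS ((N-1)/2) ≤ UU N := by
  rw [← sum_BB_sq N hN]
  apply Finset.sum_le_sum_of_subset_of_nonneg
  · apply Finset.product_subset_product <;>
    · intro i hi
      unfold BB at hi
      simp only [Finset.mem_union, Finset.mem_Icc] at hi
      simp only [Finset.mem_range]
      omega
  · intro p _ _
    exact ff_nonneg N p

lemma row_zero (N : ℕ) (hN : 2 ≤ N) :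
    ∑ j ∈ Finset.range N, ff N (0, j) ≤ 2 * Hr N := by
  have h1 : ∑ j ∈ Finset.range N, ff N (0, j) = ∑ j ∈ Finset.Ico 1 N, ff N (0, j) := by
    symm
    apply Finset.sum_subset
    · intro j hj; simp only [Finset.mem_Ico] at hj; simp only [Finset.mem_range]; omega
    · intro j hj hj'
      simp only [Finset.mem_range] at hj
      simp only [Finset.mem_Ico] at hj'
      have : j = 0 := by omega
      simp [ff, this]
  rw [h1]
  have h2 : ∀ j ∈ Finset.Ico 1 N, ff N (0, j) ≤ 1/(j:ℝ) + 1/((N-j : ℕ):ℝ) := by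
    intro j hj
    simp only [Finset.mem_Ico] at hj
    have hj1 : (1:ℝ) ≤ (j:ℝ) := by exact_mod_cast hj.1
    have hNj : (1:ℝ) ≤ ((N-j:ℕ):ℝ) := by
      have : 1 ≤ N - j := by omega
      exact_mod_cast this
    have : ff N (0, j) = 1/((mN N j : ℝ)) := by
      unfold ff
      rw [if_neg (by simp [Prod.ext_iff]; omega)]
      simp [mN]
    rw [this]
    unfold mN
    rcases le_total j (N - j) with h | h
    · rw [min_eq_left h]
      have : 0 ≤ 1/((N-j:ℕ):ℝ) := by positivity
      linarith
    · rw [min_eq_right h]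
      have : 0 ≤ 1/(j:ℝ) := by positivity
      linarith
  calc ∑ j ∈ Finset.Ico 1 N, ff N (0, j)
      ≤ ∑ j ∈ Finset.Ico 1 N, (1/(j:ℝ) + 1/((N-j:ℕ):ℝ)) := Finset.sum_le_sum h2
    _ = ∑ j ∈ Finset.Ico 1 N, 1/(j:ℝ) + ∑ j ∈ Finset.Ico 1 N, 1/((N-j:ℕ):ℝ) :=
        Finset.sum_add_distrib
    _ ≤ 2 * Hr N := by
        have e1 : ∑ j ∈ Finset.Ico 1 N, 1/(j:ℝ) = Hr (N-1) := by
          rw [Finset.sum_Ico_eq_sum_range]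
          unfold Hr
          apply Finset.sum_congr (by congr 1)
          intro i _
          push_cast
          ring_nf
        have e2 : ∑ j ∈ Finset.Ico 1 N, 1/((N-j:ℕ):ℝ) = ∑ j ∈ Finset.Ico 1 N, 1/(j:ℝ) := by
          apply Finset.sum_nbij' (fun i => N - i) (fun a => N - a)
          · intro i hi; simp only [Finset.mem_Ico] at *; omega
          · intro a ha; simp only [Finset.mem_Ico] at *; omega
          · intro i hi; simp only [Finset.mem_Ico] at hi; omega
          · intro a ha; simp only [Finset.mem_Ico] at ha; omega
          · intro i _; rfl
        rw [e2, e1]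
        have := Hr_mono (show N - 1 ≤ N by omega)
        linarith

lemma row_half (N : ℕ) (hN : 2 ≤ N) :
    ∑ j ∈ Finset.range N, ff N (N/2, j) ≤ 3 := by
  have hm : mN N (N/2) = N/2 := by unfold mN; omega
  have hpos : (0:ℝ) < ((N/2 : ℕ):ℝ) := by
    have : 1 ≤ N/2 := by omega
    exact_mod_cast Nat.lt_of_lt_of_le Nat.zero_lt_one this
  have hterm : ∀ j ∈ Finset.range N, ff N (N/2, j) ≤ 1/((N/2:ℕ):ℝ) := by
    intro j _
    unfold ff
    split
    · positivity
    · simp only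
      rw [hm]
      apply one_div_le_one_div_of_le hpos
      have : (0:ℝ) ≤ (mN N j : ℝ) := by positivity
      linarith
  calc ∑ j ∈ Finset.range N, ff N (N/2, j) ≤ ∑ j ∈ Finset.range N, 1/((N/2:ℕ):ℝ) :=
        Finset.sum_le_sum hterm
    _ = (N:ℝ) * (1/((N/2:ℕ):ℝ)) := by rw [Finset.sum_const, Finset.card_range]; simp
    _ ≤ 3 := by
        rw [mul_one_div, div_le_iff₀ hpos]
        have : (N:ℝ) ≤ 3 * ((N/2 : ℕ):ℝ) := by
          have : N ≤ 3 * (N/2) := by omega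
          exact_mod_cast this
        linarith

lemma ff_swap (N : ℕ) (p : ℕ × ℕ) : ff N (p.2, p.1) = ff N p := by
  unfold ff
  by_cases h : p = (0,0)
  · rw [if_pos (by simp [h]), if_pos h]
  · rw [if_neg (by simp [Prod.ext_iff] at h ⊢; tauto), if_neg h]
    rw [add_comm]

lemma UU_upper (N : ℕ) (hN : 2 ≤ N) : UU N ≤ 4 * SS ((N-1)/2) + 4 * Hr N + 6 := by
  classical
  set s : Finset (ℕ × ℕ) := ({0, N/2} : Finset ℕ) ×ˢ Finset.range N with hs
  set t : Finset (ℕ × ℕ) := Finset.range N ×ˢ ({0, N/2} : Finset ℕ) with ht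
  have hBsub : (BB N) ×ˢ (BB N) ⊆ (Finset.range N) ×ˢ (Finset.range N) := by
    apply Finset.product_subset_product <;>
    · intro i hi
      unfold BB at hi
      simp only [Finset.mem_union, Finset.mem_Icc] at hi
      simp only [Finset.mem_range]
      omega
  have hsplit : UU N = 4 * SS ((N-1)/2)
      + ∑ p ∈ (Finset.range N ×ˢ Finset.range N) \ ((BB N) ×ˢ (BB N)), ff N p := by
    rw [← sum_BB_sq N hN]
    unfold UU
    rw [← Finset.sum_sdiff hBsub]
    ring
  have hD : (Finset.range N ×ˢ Finset.range N) \ ((BB N) ×ˢ (BB N)) ⊆ s ∪ t := by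
    intro p hp
    simp only [Finset.mem_sdiff, Finset.mem_product, Finset.mem_range] at hp
    obtain ⟨⟨h1, h2⟩, h3⟩ := hp
    have hBc : ∀ i, i < N → i ∉ BB N → i = 0 ∨ i = N/2 := by
      intro i hi hmem
      unfold BB at hmem
      simp only [Finset.mem_union, Finset.mem_Icc] at hmem
      omega
    have : p.1 ∉ BB N ∨ p.2 ∉ BB N := by
      by_contra hcon
      push_neg at hcon
      exact h3 ⟨hcon.1, hcon.2⟩
    simp only [hs, ht, Finset.mem_union, Finset.mem_product, Finset.mem_insert,
      Finset.mem_singleton, Finset.mem_range]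
    rcases this with h | h
    · left; exact ⟨hBc p.1 h1 h, h2⟩
    · right; exact ⟨h1, hBc p.2 h2 h⟩
  have hsum_st : ∑ p ∈ s ∪ t, ff N p ≤ ∑ p ∈ s, ff N p + ∑ p ∈ t, ff N p := by
    rw [← Finset.sum_union_inter]
    have : 0 ≤ ∑ p ∈ s ∩ t, ff N p := Finset.sum_nonneg (fun p _ => ff_nonneg N p)
    linarith
  have hts : ∑ p ∈ t, ff N p = ∑ p ∈ s, ff N p := by
    apply Finset.sum_nbij' (fun p => (p.2, p.1)) (fun p => (p.2, p.1))
    · intro p hp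
      simp only [ht, hs, Finset.mem_product] at *
      exact ⟨hp.2, hp.1⟩
    · intro p hp
      simp only [ht, hs, Finset.mem_product] at *
      exact ⟨hp.2, hp.1⟩
    · intro p _; rfl
    · intro p _; rfl
    · intro p _; rw [ff_swap]
  have hssum : ∑ p ∈ s, ff N p ≤ 2 * Hr N + 3 := by
    rw [hs, Finset.sum_product]
    have h02 : (0:ℕ) ≠ N/2 := by omega
    rw [Finset.sum_insert (by simp [h02])]
    simp only [Finset.sum_singleton]
    have := row_zero N hN
    have := row_half N hN
    linarith
  have hDsum : ∑ p ∈ (Finset.range N ×ˢ Finset.range N) \ ((BB N) ×ˢ (BB N)), ff N p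
      ≤ 4 * Hr N + 6 := by
    calc _ ≤ ∑ p ∈ s ∪ t, ff N p :=
          Finset.sum_le_sum_of_subset_of_nonneg hD (fun p _ _ => ff_nonneg N p)
      _ ≤ ∑ p ∈ s, ff N p + ∑ p ∈ t, ff N p := hsum_st
      _ ≤ 4 * Hr N + 6 := by rw [hts]; linarith
  linarith


lemma tendsto_M_atTop : Tendsto (fun N : ℕ => (N-1)/2) atTop atTop := by
  apply Filter.tendsto_atTop.2
  intro b
  filter_upwards [eventually_ge_atTop (2*b+1)] with N hN
  omega

lemma tendsto_phi : Tendsto (fun N : ℕ => (((N-1)/2 : ℕ):ℝ) / N) atTop (𝓝 (1/2)) := by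
  have hlow : Tendsto (fun N : ℕ => 1/2 - 1/(N:ℝ)) atTop (𝓝 (1/2)) := by
    simpa using (tendsto_const_nhds (x := (1/2:ℝ))).sub tendsto_one_div_atTop_nhds_zero_nat
  apply tendsto_of_tendsto_of_tendsto_of_le_of_le' hlow tendsto_const_nhds
  · filter_upwards [eventually_ge_atTop 2] with N hN
    have hN0 : (0:ℝ) < N := by positivity
    rw [le_div_iff₀ hN0]
    have h1 : ((N:ℝ) - 2) ≤ 2 * (((N-1)/2 : ℕ):ℝ) := by
      have h2 : (N - 2 : ℕ) ≤ 2 * ((N-1)/2) := by omega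
      have h3 : ((N-2 : ℕ):ℝ) = (N:ℝ) - 2 := by
        push_cast [Nat.cast_sub hN]
        ring
      calc ((N:ℝ) - 2) = ((N-2:ℕ):ℝ) := h3.symm
        _ ≤ ((2 * ((N-1)/2) : ℕ):ℝ) := by exact_mod_cast h2
        _ = 2 * (((N-1)/2 : ℕ):ℝ) := by push_cast; ring
    rw [sub_mul, one_div, one_div, inv_mul_cancel₀ hN0.ne']
    linarith
  · filter_upwards [eventually_ge_atTop 2] with N hN
    have hN0 : (0:ℝ) < N := by positivity
    rw [div_le_iff₀ hN0]
    have h1 : 2 * (((N-1)/2 : ℕ):ℝ) ≤ (N:ℝ) := by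
      have h2 : 2 * ((N-1)/2) ≤ N := by omega
      exact_mod_cast h2
    linarith

lemma tendsto_UU : Tendsto (fun N : ℕ => UU N / N) atTop (𝓝 (4 * Real.log 2)) := by
  have hSS' : Tendsto (fun N : ℕ => SS ((N-1)/2) / (((N-1)/2 : ℕ):ℝ)) atTop
      (𝓝 (2 * Real.log 2)) := tendsto_SS_div.comp tendsto_M_atTop
  have haN : Tendsto (fun N : ℕ => 4 * SS ((N-1)/2) / N) atTop (𝓝 (4 * Real.log 2)) := by
    have hmul : Tendsto (fun N : ℕ =>
        4 * (SS ((N-1)/2) / (((N-1)/2 : ℕ):ℝ)) * ((((N-1)/2 : ℕ):ℝ) / N)) atTop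
        (𝓝 (4 * (2 * Real.log 2) * (1/2))) := ((hSS'.const_mul 4).mul tendsto_phi)
    have : (4 : ℝ) * (2 * Real.log 2) * (1/2) = 4 * Real.log 2 := by ring
    rw [this] at hmul
    apply hmul.congr'
    filter_upwards [eventually_ge_atTop 3] with N hN
    have hM1 : 1 ≤ (N-1)/2 := by omega
    have hM0 : (((N-1)/2 : ℕ):ℝ) ≠ 0 := by
      have : (1:ℝ) ≤ (((N-1)/2 : ℕ):ℝ) := by exact_mod_cast hM1
      linarith
    field_simp
  have hbN : Tendsto (fun N : ℕ => 4 * SS ((N-1)/2) / N + (4 * Hr N + 6)/N) atTop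
      (𝓝 (4 * Real.log 2)) := by
    have h0 : Tendsto (fun N : ℕ => (4 * Hr N + 6)/N) atTop (𝓝 0) := by
      have := (tendsto_Hr_div.const_mul 4).add
        ((tendsto_one_div_atTop_nhds_zero_nat).const_mul 6)
      simp only [mul_zero, add_zero, zero_add] at this
      apply this.congr
      intro N
      rw [add_div, mul_one_div, mul_div_assoc]
    simpa using haN.add h0
  apply tendsto_of_tendsto_of_tendsto_of_le_of_le' haN hbN
  · filter_upwards [eventually_ge_atTop 2] with N hN
    have hN0 : (0:ℝ) < N := by positivity
    exact div_le_div_of_nonneg_right (UU_lower N hN) hN0.le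
  · filter_upwards [eventually_ge_atTop 2] with N hN
    have hN0 : (0:ℝ) < N := by positivity
    have h := UU_upper N hN
    rw [← add_div]
    exact div_le_div_of_nonneg_right (by linarith) hN0.le


lemma pi_eval_pre {ι : Type*} [Fintype ι] [DecidableEq ι] {α : ι → Type*}
    [∀ i, MeasurableSpace (α i)] (μ : ∀ i, Measure (α i)) [∀ i, IsProbabilityMeasure (μ i)]
    (i : ι) (s : Set (α i)) (hs : MeasurableSet s) :
    Measure.pi μ (Function.eval i ⁻¹' s) = μ i s := by
  rw [Set.eval_preimage, Measure.pi_pi,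
    Finset.prod_eq_single_of_mem i (Finset.mem_univ i)
      (fun j _ hji => by rw [Function.update_of_ne hji]; exact measure_univ),
    Function.update_self]

lemma map_pair {ι : Type*} [Fintype ι] [DecidableEq ι] (μ : Measure ℝ)
    [IsProbabilityMeasure μ] (u v : ι) (huv : u ≠ v) :
    Measure.map (fun w : ι → ℝ => (w u, w v)) (Measure.pi fun _ => μ) = μ.prod μ := by
  have hmeas : Measurable (fun w : ι → ℝ => (w u, w v)) :=
    (measurable_pi_apply u).prodMk (measurable_pi_apply v)
  symm
  apply Measure.prod_eq
  intro s t hs ht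
  rw [Measure.map_apply hmeas (hs.prod ht)]
  have hpre : (fun w : ι → ℝ => (w u, w v)) ⁻¹' (s ×ˢ t)
      = Set.pi Set.univ (fun j => if j = u then s else if j = v then t else Set.univ) := by
    ext w
    simp only [Set.mem_preimage, Set.mem_prod, Set.mem_pi, Set.mem_univ, true_implies]
    constructor
    · intro ⟨h1, h2⟩ j
      by_cases hju : j = u
      · subst hju; simp [h1]
      · by_cases hjv : j = v
        · subst hjv; simp [hju, h2]
        · simp [hju, hjv]
    · intro h
      refine ⟨by simpa using h u, ?_⟩
      have := h v
      rw [if_neg (Ne.symm huv), if_pos rfl] at this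
      exact this
  rw [hpre, Measure.pi_pi]
  have hval : ∀ j, μ (if j = u then s else if j = v then t else Set.univ)
      = if j = u then μ s else if j = v then μ t else 1 := by
    intro j
    by_cases hju : j = u
    · simp [hju]
    · by_cases hjv : j = v
      · subst hjv; simp [hju, if_neg (Ne.symm huv)]
      · simp [hju, hjv]
  rw [Finset.prod_congr rfl (fun j _ => hval j),
    Finset.prod_eq_mul_of_mem u v (Finset.mem_univ u) (Finset.mem_univ v) huv
      (fun j _ hj => by rw [if_neg hj.1, if_neg hj.2])]
  rw [if_pos rfl, if_neg (Ne.symm huv), if_pos rfl]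


section FcSec

noncomputable def Fc (μ : Measure ℝ) (c t : ℝ) : ℝ :=
  ∫ p, min (c * p.1 * p.2 / t) 1 ∂(μ.prod μ)

noncomputable def Gc (μ : Measure ℝ) (c t : ℝ) : ℝ :=
  ∫ p, min (c * p.1 * p.2) t ∂(μ.prod μ)

variable {μ : Measure ℝ} [IsProbabilityMeasure μ] {c : ℝ}

lemma ae_prod_nonneg (hW : μ (Set.Iio 0) = 0) :
    ∀ᵐ p ∂(μ.prod μ), 0 ≤ p.1 ∧ 0 ≤ p.2 := by
  have hsub : {p : ℝ × ℝ | ¬ (0 ≤ p.1 ∧ 0 ≤ p.2)}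
      ⊆ (Set.Iio 0 ×ˢ Set.univ) ∪ (Set.univ ×ˢ Set.Iio 0) := by
    intro p hp
    simp only [Set.mem_setOf_eq, not_and_or, not_le] at hp
    rcases hp with h | h
    · exact Or.inl ⟨h, Set.mem_univ _⟩
    · exact Or.inr ⟨Set.mem_univ _, h⟩
  have hnull : (μ.prod μ) ((Set.Iio 0 ×ˢ Set.univ) ∪ (Set.univ ×ˢ Set.Iio 0)) = 0 :=
    measure_union_null (by rw [Measure.prod_prod]; simp [hW])
      (by rw [Measure.prod_prod]; simp [hW])
  exact measure_mono_null hsub hnull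

lemma integrable_cab (hint : Integrable id μ) :
    Integrable (fun p : ℝ × ℝ => c * p.1 * p.2) (μ.prod μ) := by
  have := Integrable.mul_prod (hint.const_mul c) hint
  apply this.congr
  filter_upwards with p
  simp [id]

lemma integrable_min_div (hW : μ (Set.Iio 0) = 0) {t : ℝ} (ht : 0 ≤ t) (hc : 0 < c) :
    Integrable (fun p : ℝ × ℝ => min (c * p.1 * p.2 / t) 1) (μ.prod μ) := by
  apply Integrable.mono' (integrable_const (1:ℝ))
  · exact (Continuous.min (by continuity) continuous_const).aestronglyMeasurable
  · filter_upwards [ae_prod_nonneg hW] with p hp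
    rw [Real.norm_eq_abs, abs_le]
    constructor
    · have : (0:ℝ) ≤ min (c * p.1 * p.2 / t) 1 :=
        le_min (div_nonneg (mul_nonneg (mul_nonneg hc.le hp.1) hp.2) ht) zero_le_one
      linarith
    · exact min_le_right _ _

lemma integrable_min_cab (hW : μ (Set.Iio 0) = 0) {t : ℝ} (ht : 0 ≤ t) (hc : 0 < c) :
    Integrable (fun p : ℝ × ℝ => min (c * p.1 * p.2) t) (μ.prod μ) := by
  apply Integrable.mono' (integrable_const t)
  · exact (Continuous.min (by continuity) continuous_const).aestronglyMeasurable
  · filter_upwards [ae_prod_nonneg hW] with p hp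
    rw [Real.norm_eq_abs, abs_le]
    constructor
    · have : (0:ℝ) ≤ min (c * p.1 * p.2) t :=
        le_min (mul_nonneg (mul_nonneg hc.le hp.1) hp.2) ht
      linarith
    · exact min_le_right _ _

lemma Fc_nonneg (hW : μ (Set.Iio 0) = 0) {t : ℝ} (ht : 0 ≤ t) (hc : 0 < c) :
    0 ≤ Fc μ c t := by
  apply integral_nonneg_of_ae
  filter_upwards [ae_prod_nonneg hW] with p hp
  exact le_min (div_nonneg (mul_nonneg (mul_nonneg hc.le hp.1) hp.2) ht) zero_le_one

lemma tFc_eq_Gc (hW : μ (Set.Iio 0) = 0) {t : ℝ} (ht : 0 < t) :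
    t * Fc μ c t = Gc μ c t := by
  unfold Fc Gc
  rw [← integral_const_mul]
  apply integral_congr_ae
  filter_upwards with p
  rw [mul_min_of_nonneg _ _ ht.le, mul_div_cancel₀ _ ht.ne', mul_one]

lemma Gc_mono (hW : μ (Set.Iio 0) = 0) (hc : 0 < c) {s t : ℝ} (hs : 0 ≤ s) (hst : s ≤ t) :
    Gc μ c s ≤ Gc μ c t := by
  apply integral_mono (integrable_min_cab hW hs hc) (integrable_min_cab hW (hs.trans hst) hc)
  intro p
  exact min_le_min (le_refl _) hst

lemma Gc_le (hW : μ (Set.Iio 0) = 0) (hint : Integrable id μ) (hc : 0 < c) {t : ℝ} (ht : 0 ≤ t) :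
    Gc μ c t ≤ c * (∫ x, x ∂μ)^2 := by
  have h1 : Gc μ c t ≤ ∫ p, c * p.1 * p.2 ∂(μ.prod μ) := by
    apply integral_mono (integrable_min_cab hW ht hc) (integrable_cab hint)
    intro p
    exact min_le_left _ _
  have h2 : ∫ p : ℝ × ℝ, c * p.1 * p.2 ∂(μ.prod μ) = c * (∫ x, x ∂μ)^2 := by
    have := integral_prod_mul (μ := μ) (ν := μ) (fun a => c * a) (fun b => b)
    calc ∫ p : ℝ × ℝ, c * p.1 * p.2 ∂(μ.prod μ)
        = ∫ p : ℝ × ℝ, (fun a => c * a) p.1 * (fun b => b) p.2 ∂(μ.prod μ) := rfl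
      _ = (∫ x, c * x ∂μ) * (∫ x, x ∂μ) := this
      _ = c * (∫ x, x ∂μ)^2 := by rw [integral_const_mul]; ring
  linarith

lemma tendsto_Gc (hW : μ (Set.Iio 0) = 0) (hint : Integrable id μ) (hc : 0 < c) :
    Tendsto (fun n : ℕ => Gc μ c n) atTop (𝓝 (c * (∫ x, x ∂μ)^2)) := by
  have h2 : ∫ p : ℝ × ℝ, c * p.1 * p.2 ∂(μ.prod μ) = c * (∫ x, x ∂μ)^2 := by
    have := integral_prod_mul (μ := μ) (ν := μ) (fun a => c * a) (fun b => b)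
    calc ∫ p : ℝ × ℝ, c * p.1 * p.2 ∂(μ.prod μ)
        = (∫ x, c * x ∂μ) * (∫ x, x ∂μ) := this
      _ = c * (∫ x, x ∂μ)^2 := by rw [integral_const_mul]; ring
  rw [← h2]
  apply tendsto_integral_of_dominated_convergence (fun p => c * p.1 * p.2)
  · intro n
    exact (Continuous.min (by continuity) continuous_const).aestronglyMeasurable
  · exact (integrable_cab hint)
  · intro n
    filter_upwards [ae_prod_nonneg hW] with p hp
    rw [Real.norm_eq_abs, abs_le]
    have hcab : (0:ℝ) ≤ c * p.1 * p.2 := mul_nonneg (mul_nonneg hc.le hp.1) hp.2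
    have h0 : (0:ℝ) ≤ min (c * p.1 * p.2) (n:ℝ) := le_min hcab (by positivity)
    constructor
    · linarith
    · exact min_le_left _ _
  · filter_upwards with p
    apply Tendsto.congr' _ tendsto_const_nhds
    filter_upwards [eventually_ge_atTop (Nat.ceil (c * p.1 * p.2))] with n hn
    symm
    apply min_eq_left
    calc c * p.1 * p.2 ≤ (Nat.ceil (c * p.1 * p.2) : ℝ) := Nat.le_ceil _
      _ ≤ (n : ℝ) := by exact_mod_cast hn


end FcSec

section MeasureAdj

instance : IsProbabilityMeasure unif01 := by
  constructor
  rw [unif01, Measure.restrict_apply MeasurableSet.univ, Set.univ_inter, Real.volume_Icc]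
  norm_num

lemma unif01_Iio {p : ℝ} (h0 : 0 ≤ p) (h1 : p ≤ 1) :
    unif01 (Set.Iio p) = ENNReal.ofReal p := by
  rw [unif01, Measure.restrict_apply measurableSet_Iio]
  have : Set.Iio p ∩ Set.Icc 0 1 = Set.Ico 0 p := by
    ext x
    simp only [Set.mem_inter_iff, Set.mem_Iio, Set.mem_Icc, Set.mem_Ico]
    constructor
    · rintro ⟨hx, hx0, _⟩; exact ⟨hx0, hx⟩
    · rintro ⟨hx0, hx⟩; exact ⟨hx, hx0, by linarith⟩
  rw [this, Real.volume_Ico, sub_zero]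

lemma torusDist_pos {N : ℕ} {u v : Fin N × Fin N} (huv : u ≠ v) :
    1 ≤ torusDist N u v := by
  by_contra h
  push_neg at h
  have h1 := u.1.isLt
  have h2 := v.1.isLt
  have h3 := u.2.isLt
  have h4 := v.2.isLt
  apply huv
  have e12 : u.1.val = v.1.val ∧ u.2.val = v.2.val := by
    unfold torusDist dN at h
    split_ifs at h <;> omega
  exact Prod.ext (Fin.ext e12.1) (Fin.ext e12.2)

variable (N : ℕ) (c : ℝ) (hc : 0 < c) (μW : Measure ℝ) [IsProbabilityMeasure μW]

lemma measure_adj (hc : 0 < c) (hW : μW (Set.Iio 0) = 0)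
    (u v : Fin N × Fin N) (huv : u ≠ v) :
    ((weightedMeasure N μW) {ω : (Fin N × Fin N → ℝ) × (Sym2 (Fin N × Fin N) → ℝ) |
        (distGraph N c ω.1 ω.2).Adj u v}).toReal
      = Fc μW c ((N:ℝ) * (torusDist N u v : ℝ)) := by
  classical
  set t : ℝ := (N:ℝ) * (torusDist N u v : ℝ) with ht_def
  have htpos : 0 < t := by
    have h1 : 1 ≤ torusDist N u v := torusDist_pos huv
    have hN : 0 < N := u.1.pos
    have : (0:ℝ) < (N:ℝ) := by exact_mod_cast hN
    have : (0:ℝ) < (torusDist N u v : ℝ) := by exact_mod_cast h1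
    positivity
  set e : Sym2 (Fin N × Fin N) := s(u, v) with he
  set g : (Fin N × Fin N → ℝ) → ℝ := fun w => min (c * w u * w v / t) 1 with hg
  have hgmeas : Measurable g := by
    rw [hg]; fun_prop
  have hAset : {ω : (Fin N × Fin N → ℝ) × (Sym2 (Fin N × Fin N) → ℝ) |
      (distGraph N c ω.1 ω.2).Adj u v} = {ω | ω.2 e < g ω.1} := by
    ext ω
    simp only [Set.mem_setOf_eq, distGraph, ne_eq, huv, not_false_iff, true_and]
    constructor
    · intro h; rw [he, hg]; simpa [edgeProb, ht_def] using h
    · intro h; simp only [edgeProb, Sym2.lift_mk]; rw [he, hg] at h; simpa [ht_def] using h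
  rw [hAset]
  have hAmeas : MeasurableSet {ω : (Fin N × Fin N → ℝ) × (Sym2 (Fin N × Fin N) → ℝ) |
      ω.2 e < g ω.1} := by
    apply measurableSet_lt
    · exact (measurable_pi_apply e).comp measurable_snd
    · exact hgmeas.comp measurable_fst
  have ae_w : ∀ᵐ w ∂(Measure.pi fun _ : Fin N × Fin N => μW), 0 ≤ w u ∧ 0 ≤ w v := by
    have hnull : ∀ z : Fin N × Fin N,
        (Measure.pi fun _ : Fin N × Fin N => μW) (Function.eval z ⁻¹' Set.Iio 0) = 0 := by
      intro z
      rw [pi_eval_pre _ z _ measurableSet_Iio]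
      exact hW
    have hsub : {w : Fin N × Fin N → ℝ | ¬ (0 ≤ w u ∧ 0 ≤ w v)}
        ⊆ (Function.eval u ⁻¹' Set.Iio 0) ∪ (Function.eval v ⁻¹' Set.Iio 0) := by
      intro w hw
      simp only [Set.mem_setOf_eq, not_and_or, not_le] at hw
      rcases hw with h | h
      · exact Or.inl h
      · exact Or.inr h
    exact measure_mono_null hsub (measure_union_null (hnull u) (hnull v))
  have hgbound : ∀ᵐ w ∂(Measure.pi fun _ : Fin N × Fin N => μW), 0 ≤ g w ∧ g w ≤ 1 := by
    filter_upwards [ae_w] with w hw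
    constructor
    · exact le_min (div_nonneg (mul_nonneg (mul_nonneg hc.le hw.1) hw.2) htpos.le) zero_le_one
    · exact min_le_right _ _
  have hgint : Integrable g (Measure.pi fun _ : Fin N × Fin N => μW) := by
    apply Integrable.mono' (integrable_const (1:ℝ)) hgmeas.aestronglyMeasurable
    filter_upwards [hgbound] with w hw
    rw [Real.norm_eq_abs, abs_le]
    exact ⟨by linarith [hw.1], hw.2⟩
  haveI : IsProbabilityMeasure (edgeMeasure N) :=
    inferInstanceAs (IsProbabilityMeasure (Measure.pi fun _ => unif01))
  rw [weightedMeasure, Measure.prod_apply hAmeas]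
  have hfiber : ∀ w : Fin N × Fin N → ℝ,
      (edgeMeasure N) (Prod.mk w ⁻¹' {ω : (Fin N × Fin N → ℝ) × (Sym2 (Fin N × Fin N) → ℝ) |
        ω.2 e < g ω.1}) = unif01 (Set.Iio (g w)) := by
    intro w
    have : Prod.mk w ⁻¹' {ω : (Fin N × Fin N → ℝ) × (Sym2 (Fin N × Fin N) → ℝ) |
        ω.2 e < g ω.1} = Function.eval e ⁻¹' Set.Iio (g w) := rfl
    rw [this, edgeMeasure, pi_eval_pre _ e _ measurableSet_Iio]
  have hlint : ∫⁻ w, (edgeMeasure N) (Prod.mk w ⁻¹' {ω : (Fin N × Fin N → ℝ) × (Sym2 (Fin N × Fin N) → ℝ) |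
        ω.2 e < g ω.1}) ∂(Measure.pi fun _ : Fin N × Fin N => μW)
      = ∫⁻ w, ENNReal.ofReal (g w) ∂(Measure.pi fun _ : Fin N × Fin N => μW) := by
    apply lintegral_congr_ae
    filter_upwards [hgbound] with w hw
    rw [hfiber w, unif01_Iio hw.1 hw.2]
  rw [hlint, ← ofReal_integral_eq_lintegral_ofReal hgint
    (by filter_upwards [hgbound] with w hw using hw.1)]
  rw [ENNReal.toReal_ofReal (integral_nonneg_of_ae
    (by filter_upwards [hgbound] with w hw using hw.1))]
  -- now ∫ g dpi = Fc μW c t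
  have hmap := map_pair μW u v huv
  have : Fc μW c t = ∫ w, g w ∂(Measure.pi fun _ : Fin N × Fin N => μW) := by
    rw [Fc, ← hmap,
      integral_map (((measurable_pi_apply u).prodMk (measurable_pi_apply v)).aemeasurable)
        ((Continuous.min (((continuous_const.mul continuous_fst).mul continuous_snd).div_const t)
          continuous_const).aestronglyMeasurable)]
  rw [this]


end MeasureAdj

-- graph counting lemma
lemma ncard_edgeSet {V : Type*} [Fintype V] [DecidableEq V]
    (G : SimpleGraph V) [DecidableRel G.Adj] :
    ((G.edgeSet.ncard : ℝ)) = (1/2) * ∑ u : V, ∑ v : V, (if G.Adj u v then (1:ℝ) else 0) := by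
  have h1 : ∀ u : V, ∑ v : V, (if G.Adj u v then (1:ℝ) else 0) = (G.degree u : ℝ) := by
    intro u
    rw [Finset.sum_boole]
    congr 1
    rw [SimpleGraph.degree]
    congr 1
    ext v
    simp [SimpleGraph.mem_neighborFinset]
  rw [Finset.sum_congr rfl (fun u _ => h1 u)]
  have h2 : ∑ u : V, (G.degree u : ℝ) = ((∑ u : V, G.degree u : ℕ) : ℝ) := by push_cast; rfl
  rw [h2, SimpleGraph.sum_degrees_eq_twice_card_edges]
  have h3 : G.edgeSet.ncard = G.edgeFinset.card := by
    rw [SimpleGraph.edgeFinset]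
    exact Set.ncard_eq_toFinset_card' _
  rw [h3]
  push_cast
  ring

-- translation lemmas
section translation
variable (N : ℕ) [NeZero N]


lemma dN_comp (x y : Fin N) :
    dN N (((x.val:ℤ) - (((y + x : Fin N).val:ℤ)))).natAbs = dN N y.val := by
  have hx := x.isLt
  have hy := y.isLt
  have hval : (y + x : Fin N).val = (y.val + x.val) % N := Fin.val_add y x
  by_cases h : y.val + x.val < N
  · rw [hval, Nat.mod_eq_of_lt h]
    have : (((x.val:ℤ) - ((y.val + x.val : ℕ) : ℤ))).natAbs = y.val := by
      push_cast
      omega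
    rw [this]
  · push_neg at h
    have hmod : (y.val + x.val) % N = y.val + x.val - N := by
      rw [Nat.mod_eq_sub_mod h, Nat.mod_eq_of_lt (by omega)]
    rw [hval, hmod]
    have hcast : (((y.val + x.val - N : ℕ)) : ℤ) = (y.val : ℤ) + x.val - N := by
      push_cast [Nat.cast_sub h]
      ring
    have : (((x.val:ℤ) - ((y.val + x.val - N : ℕ) : ℤ))).natAbs = N - y.val := by
      rw [hcast]
      omega
    rw [this]
    have hy1 : 1 ≤ y.val := by omega
    unfold dN
    split_ifs <;> omega

lemma dist_translate (u w : Fin N × Fin N) :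
    torusDist N u (w + u) = torusDist N 0 w := by
  unfold torusDist
  have e1 : (w + u).1 = w.1 + u.1 := rfl
  have e2 : (w + u).2 = w.2 + u.2 := rfl
  rw [e1, e2, dN_comp N u.1 w.1, dN_comp N u.2 w.2]
  have z1 : ((0 : Fin N × Fin N).1.val : ℤ) = 0 := by simp
  have z2 : ((0 : Fin N × Fin N).2.val : ℤ) = 0 := by simp
  rw [z1, z2]
  congr 1 <;> · congr 1; omega

lemma my_sum_translate (u : Fin N × Fin N) (F : ℕ → ℝ) :
    ∑ v : Fin N × Fin N, (if v = u then 0 else F (torusDist N u v))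
      = ∑ w : Fin N × Fin N, (if w = 0 then 0 else F (torusDist N 0 w)) := by
  symm
  apply Fintype.sum_equiv (Equiv.addRight u)
    (fun w => if w = 0 then 0 else F (torusDist N 0 w))
    (fun v => if v = u then 0 else F (torusDist N u v))
  intro w
  simp only [Equiv.coe_addRight]
  by_cases hw : w = 0
  · subst hw; simp
  · have h2 : ¬ (w + u = u) := by simpa using hw
    simp only [if_neg hw, if_neg h2, dist_translate]

lemma torusDist_zero_eq (w : Fin N × Fin N) :
    torusDist N 0 w = min w.1.val (N - w.1.val) + min w.2.val (N - w.2.val) := by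
  unfold torusDist
  have h1 := w.1.isLt
  have h2 := w.2.isLt
  have z1 : ((0 : Fin N × Fin N).1.val : ℤ) = 0 := by simp
  have z2 : ((0 : Fin N × Fin N).2.val : ℤ) = 0 := by simp
  rw [z1, z2]
  have e1 : ((0:ℤ) - (w.1.val : ℤ)).natAbs = w.1.val := by omega
  have e2 : ((0:ℤ) - (w.2.val : ℤ)).natAbs = w.2.val := by omega
  rw [e1, e2]
  unfold dN
  congr 1 <;> split_ifs <;> omega

lemma fin_sum_to_range (F : ℕ → ℝ) :
    ∑ w : Fin N × Fin N, (if w = 0 then 0 else F (torusDist N 0 w))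
      = ∑ i ∈ Finset.range N, ∑ j ∈ Finset.range N,
          (if i = 0 ∧ j = 0 then 0 else F (min i (N-i) + min j (N-j))) := by
  rw [Fintype.sum_prod_type]
  have key : ∀ a b : Fin N, (if (a, b) = (0 : Fin N × Fin N) then (0:ℝ)
      else F (torusDist N 0 (a, b)))
      = (if a.val = 0 ∧ b.val = 0 then (0:ℝ)
          else F (min a.val (N - a.val) + min b.val (N - b.val))) := by
    intro a b
    have hab : ((a, b) = (0 : Fin N × Fin N)) ↔ (a.val = 0 ∧ b.val = 0) := by
      rw [Prod.ext_iff]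
      simp only [Prod.fst_zero, Prod.snd_zero, Fin.ext_iff, Fin.val_zero]
    by_cases h : (a, b) = (0 : Fin N × Fin N)
    · rw [if_pos h, if_pos (hab.1 h)]
    · rw [if_neg h, if_neg (fun hc => h (hab.2 hc)), torusDist_zero_eq]
  calc ∑ a : Fin N, ∑ b : Fin N, (if (a, b) = (0 : Fin N × Fin N) then (0:ℝ)
        else F (torusDist N 0 (a, b)))
      = ∑ a : Fin N, ∑ b : Fin N, (if a.val = 0 ∧ b.val = 0 then (0:ℝ)
          else F (min a.val (N - a.val) + min b.val (N - b.val))) := by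
        exact Finset.sum_congr rfl (fun a _ => Finset.sum_congr rfl (fun b _ => key a b))
    _ = ∑ a : Fin N, ∑ j ∈ Finset.range N, (if a.val = 0 ∧ j = 0 then (0:ℝ)
          else F (min a.val (N - a.val) + min j (N - j))) := by
        apply Finset.sum_congr rfl
        intro a _
        exact Fin.sum_univ_eq_sum_range
          (fun j => if a.val = 0 ∧ j = 0 then (0:ℝ)
            else F (min a.val (N - a.val) + min j (N - j))) N
    _ = ∑ i ∈ Finset.range N, ∑ j ∈ Finset.range N,
          (if i = 0 ∧ j = 0 then 0 else F (min i (N-i) + min j (N-j))) := by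
        exact Fin.sum_univ_eq_sum_range
          (fun i => ∑ j ∈ Finset.range N, (if i = 0 ∧ j = 0 then (0:ℝ)
            else F (min i (N-i) + min j (N-j)))) N
end translation


lemma integral_ncard (N : ℕ) (c : ℝ) (μW : Measure ℝ) [IsProbabilityMeasure μW]
    (hc : 0 < c) (hW : μW (Set.Iio 0) = 0) :
    ∫ ω, ((distGraph N c ω.1 ω.2).edgeSet.ncard : ℝ) ∂(weightedMeasure N μW)
      = (1/2) * ∑ u : Fin N × Fin N, ∑ v : Fin N × Fin N,
          (if u = v then 0 else Fc μW c ((N:ℝ) * (torusDist N u v : ℝ))) := by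
  classical
  haveI : IsProbabilityMeasure (edgeMeasure N) :=
    inferInstanceAs (IsProbabilityMeasure (Measure.pi fun _ => unif01))
  haveI : IsProbabilityMeasure (weightedMeasure N μW) :=
    inferInstanceAs (IsProbabilityMeasure ((Measure.pi fun _ => μW).prod (edgeMeasure N)))
  have hAmeas : ∀ u v : Fin N × Fin N,
      MeasurableSet {ω : (Fin N × Fin N → ℝ) × (Sym2 (Fin N × Fin N) → ℝ) |
        (distGraph N c ω.1 ω.2).Adj u v} := by
    intro u v
    by_cases huv : u = v
    · have : {ω : (Fin N × Fin N → ℝ) × (Sym2 (Fin N × Fin N) → ℝ) |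
          (distGraph N c ω.1 ω.2).Adj u v} = ∅ := by
        ext ω; simp [distGraph, huv]
      rw [this]; exact MeasurableSet.empty
    · have hset : {ω : (Fin N × Fin N → ℝ) × (Sym2 (Fin N × Fin N) → ℝ) |
          (distGraph N c ω.1 ω.2).Adj u v}
          = {ω : (Fin N × Fin N → ℝ) × (Sym2 (Fin N × Fin N) → ℝ) |
            ω.2 s(u,v) < min (c * ω.1 u * ω.1 v / ((N : ℝ) * (torusDist N u v : ℝ))) 1} := by
        ext ω; simp [distGraph, huv, edgeProb]
      rw [hset]
      apply measurableSet_lt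
      · exact (measurable_pi_apply _).comp measurable_snd
      · fun_prop
  have hind : ∀ u v : Fin N × Fin N,
      Integrable (fun ω : (Fin N × Fin N → ℝ) × (Sym2 (Fin N × Fin N) → ℝ) =>
        if (distGraph N c ω.1 ω.2).Adj u v then (1:ℝ) else 0) (weightedMeasure N μW) := by
    intro u v
    have heq : (fun ω : (Fin N × Fin N → ℝ) × (Sym2 (Fin N × Fin N) → ℝ) =>
        if (distGraph N c ω.1 ω.2).Adj u v then (1:ℝ) else 0)
        = Set.indicator {ω : (Fin N × Fin N → ℝ) × (Sym2 (Fin N × Fin N) → ℝ) |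
            (distGraph N c ω.1 ω.2).Adj u v} (fun _ => (1:ℝ)) := by
      funext ω
      rw [Set.indicator_apply]
      congr 1
    rw [heq, integrable_indicator_iff (hAmeas u v)]
    exact integrableOn_const
  have hpt : (fun ω : (Fin N × Fin N → ℝ) × (Sym2 (Fin N × Fin N) → ℝ) =>
      ((distGraph N c ω.1 ω.2).edgeSet.ncard : ℝ))
      = fun ω => (1/2) * ∑ u : Fin N × Fin N, ∑ v : Fin N × Fin N,
          (if (distGraph N c ω.1 ω.2).Adj u v then (1:ℝ) else 0) := by
    funext ω
    exact ncard_edgeSet _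
  rw [hpt]
  rw [integral_const_mul]
  rw [integral_finset_sum Finset.univ
    (fun u _ => integrable_finset_sum Finset.univ (fun v _ => hind u v))]
  congr 1
  apply Finset.sum_congr rfl
  intro u _
  rw [integral_finset_sum Finset.univ (fun v _ => hind u v)]
  apply Finset.sum_congr rfl
  intro v _
  have hieq : ∫ ω, (if (distGraph N c ω.1 ω.2).Adj u v then (1:ℝ) else 0)
      ∂(weightedMeasure N μW)
      = ((weightedMeasure N μW) {ω : (Fin N × Fin N → ℝ) × (Sym2 (Fin N × Fin N) → ℝ) |
          (distGraph N c ω.1 ω.2).Adj u v}).toReal := by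
    have heq : (fun ω : (Fin N × Fin N → ℝ) × (Sym2 (Fin N × Fin N) → ℝ) =>
        if (distGraph N c ω.1 ω.2).Adj u v then (1:ℝ) else 0)
        = Set.indicator {ω : (Fin N × Fin N → ℝ) × (Sym2 (Fin N × Fin N) → ℝ) |
            (distGraph N c ω.1 ω.2).Adj u v} (fun _ => (1:ℝ)) := by
      funext ω
      rw [Set.indicator_apply]
      congr 1
    rw [heq]
    exact integral_indicator_one (hAmeas u v)
  rw [hieq]
  by_cases huv : u = v
  · rw [if_pos huv]
    have : {ω : (Fin N × Fin N → ℝ) × (Sym2 (Fin N × Fin N) → ℝ) |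
        (distGraph N c ω.1 ω.2).Adj u v} = ∅ := by
      ext ω; simp [distGraph, huv]
    rw [this]
    simp
  · rw [if_neg huv]
    exact measure_adj N c μW hc hW u v huv


end AuxDev

/-- Assume `E W² < ∞`. Then the expected number of edges of `G_{N,W}`
satisfies `(1/N²) E[e(G_{N,W})] → (λ/2) (E W)²` as `N → ∞`, where `λ = 4 c log 2`. -/
theorem expected_edges_asymptotics
    (c : ℝ) (hc : 0 < c)
    (μW : Measure ℝ) [IsProbabilityMeasure μW]
    (hWnonneg : μW (Set.Iio 0) = 0)
    (hW2 : Integrable (fun x => x ^ 2) μW) :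
    Tendsto (fun N : ℕ =>
        (1 / (N : ℝ) ^ 2) *
          ∫ ω, ((distGraph N c ω.1 ω.2).edgeSet.ncard : ℝ) ∂(weightedMeasure N μW))
      atTop (nhds ((4 * c * Real.log 2) / 2 * (∫ x, x ∂μW) ^ 2)) := by
  classical
  have hint : Integrable id μW := by
    apply Integrable.mono' (hW2.add (integrable_const 1)) measurable_id.aestronglyMeasurable
    filter_upwards with x
    simp only [id_eq, Pi.add_apply]
    rw [Real.norm_eq_abs]
    nlinarith [sq_abs x, sq_nonneg (|x| - 1), abs_nonneg x]
  set m : ℝ := ∫ x, x ∂μW with hm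
  set GN : ℕ → ℝ := fun N => ∑ i ∈ Finset.range N, ∑ j ∈ Finset.range N,
    (if i = 0 ∧ j = 0 then 0
      else Fc μW c ((N:ℝ) * ((min i (N-i) + min j (N-j) : ℕ):ℝ))) with hGN
  set WW : ℕ → ℝ := fun N => ∑ i ∈ Finset.range N, ∑ j ∈ Finset.range N,
    (if i = 0 ∧ j = 0 then 0
      else 1/((N:ℝ) * ((min i (N-i) + min j (N-j) : ℕ):ℝ))) with hWW
  -- step 1: eventual identity for the expectation
  have key_eq : ∀ᶠ N : ℕ in atTop,
      (1 / (N:ℝ)^2) * ∫ ω, ((distGraph N c ω.1 ω.2).edgeSet.ncard : ℝ)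
        ∂(weightedMeasure N μW) = (1/2) * GN N := by
    filter_upwards [eventually_ge_atTop 2] with N hN
    haveI : NeZero N := ⟨by omega⟩
    rw [integral_ncard N c μW hc hWnonneg]
    have h1 : ∀ u : Fin N × Fin N, ∑ v : Fin N × Fin N,
        (if u = v then (0:ℝ) else Fc μW c ((N:ℝ)*(torusDist N u v : ℝ))) = GN N := by
      intro u
      have e0 : ∑ v : Fin N × Fin N,
          (if u = v then (0:ℝ) else Fc μW c ((N:ℝ)*(torusDist N u v : ℝ)))
          = ∑ v : Fin N × Fin N, (if v = u then (0:ℝ)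
              else (fun k : ℕ => Fc μW c ((N:ℝ)*(k:ℝ))) (torusDist N u v)) := by
        apply Finset.sum_congr rfl
        intro v _
        exact if_congr eq_comm rfl rfl
      rw [e0, my_sum_translate N u (fun k : ℕ => Fc μW c ((N:ℝ)*(k:ℝ))),
        fin_sum_to_range N (fun k : ℕ => Fc μW c ((N:ℝ)*(k:ℝ)))]
    rw [Finset.sum_congr rfl (fun u _ => h1 u), Finset.sum_const, Finset.card_univ]
    have hcard : Fintype.card (Fin N × Fin N) = N * N := by simp
    rw [hcard, nsmul_eq_mul]
    have hN0 : ((N:ℝ)) ≠ 0 := by positivity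
    push_cast
    field_simp
  -- step 2: WW N = UU N / N eventually
  have hWWeq : ∀ N : ℕ, 2 ≤ N → WW N = UU N / N := by
    intro N hN
    have hN0 : ((N:ℝ)) ≠ 0 := by positivity
    rw [hWW]
    simp only
    rw [UU, Finset.sum_product, Finset.sum_div]
    apply Finset.sum_congr rfl
    intro i _
    rw [Finset.sum_div]
    apply Finset.sum_congr rfl
    intro j _
    rw [ff]
    by_cases h : i = 0 ∧ j = 0
    · rw [if_pos h, if_pos (by simp [Prod.ext_iff, h.1, h.2]), zero_div]
    · rw [if_neg h, if_neg (by simp [Prod.ext_iff]; tauto)]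
      have : ((min i (N-i) + min j (N-j) : ℕ):ℝ) = (mN N i : ℝ) + (mN N j : ℝ) := by
        rw [mN, mN]; push_cast; ring
      rw [this, mul_comm, ← div_div]
  have hWWlim : Tendsto WW atTop (𝓝 (4 * Real.log 2)) := by
    apply tendsto_UU.congr'
    filter_upwards [eventually_ge_atTop 2] with N hN
    exact (hWWeq N hN).symm
  -- step 3: squeeze GN between (Gc μW c N) * WW N and (c*m^2) * WW N
  have hbounds : ∀ N : ℕ, 2 ≤ N →
      Gc μW c (N:ℝ) * WW N ≤ GN N ∧ GN N ≤ c * m^2 * WW N := by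
    intro N hN
    have hNpos : (0:ℝ) < (N:ℝ) := by positivity
    have hterm : ∀ i ∈ Finset.range N, ∀ j ∈ Finset.range N,
        Gc μW c (N:ℝ) * (if i = 0 ∧ j = 0 then (0:ℝ)
            else 1/((N:ℝ) * ((min i (N-i) + min j (N-j) : ℕ):ℝ)))
          ≤ (if i = 0 ∧ j = 0 then 0
            else Fc μW c ((N:ℝ) * ((min i (N-i) + min j (N-j) : ℕ):ℝ)))
        ∧ (if i = 0 ∧ j = 0 then (0:ℝ)
            else Fc μW c ((N:ℝ) * ((min i (N-i) + min j (N-j) : ℕ):ℝ)))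
          ≤ c * m^2 * (if i = 0 ∧ j = 0 then 0
            else 1/((N:ℝ) * ((min i (N-i) + min j (N-j) : ℕ):ℝ))) := by
      intro i hi j hj
      simp only [Finset.mem_range] at hi hj
      by_cases h : i = 0 ∧ j = 0
      · rw [if_pos h, if_pos h]
        simp
      · rw [if_neg h, if_neg h]
        have hd1 : 1 ≤ min i (N-i) + min j (N-j) := by omega
        have hdpos : (0:ℝ) < ((min i (N-i) + min j (N-j) : ℕ):ℝ) := by
          exact_mod_cast Nat.lt_of_lt_of_le Nat.zero_lt_one hd1
        set τ : ℝ := (N:ℝ) * ((min i (N-i) + min j (N-j) : ℕ):ℝ) with hτ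
        have hτpos : 0 < τ := by positivity
        have hNτ : (N:ℝ) ≤ τ := by
          rw [hτ]
          nlinarith [hdpos, hNpos, (by exact_mod_cast hd1 : (1:ℝ) ≤ ((min i (N-i) + min j (N-j) : ℕ):ℝ))]
        have hFc : Fc μW c τ = Gc μW c τ / τ := by
          rw [eq_div_iff hτpos.ne', mul_comm, tFc_eq_Gc hWnonneg hτpos]
        constructor
        · rw [hFc, mul_one_div]
          apply div_le_div_of_nonneg_right _ hτpos.le
          exact Gc_mono hWnonneg hc hNpos.le hNτ
        · rw [hFc, mul_one_div]
          apply div_le_div_of_nonneg_right _ hτpos.le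
          rw [hm]
          exact Gc_le hWnonneg hint hc hτpos.le
    constructor
    · rw [hWW, hGN]
      simp only
      rw [Finset.mul_sum]
      apply Finset.sum_le_sum
      intro i hi
      rw [Finset.mul_sum]
      apply Finset.sum_le_sum
      intro j hj
      exact (hterm i hi j hj).1
    · rw [hWW, hGN]
      simp only
      rw [Finset.mul_sum]
      apply Finset.sum_le_sum
      intro i hi
      rw [Finset.mul_sum]
      apply Finset.sum_le_sum
      intro j hj
      exact (hterm i hi j hj).2
  have hGclim : Tendsto (fun N : ℕ => Gc μW c (N:ℝ)) atTop (𝓝 (c * m^2)) := by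
    rw [hm]
    exact tendsto_Gc hWnonneg hint hc
  have hGNlim : Tendsto GN atTop (𝓝 (c * m^2 * (4 * Real.log 2))) := by
    apply tendsto_of_tendsto_of_tendsto_of_le_of_le' (hGclim.mul hWWlim)
      (hWWlim.const_mul (c * m^2))
    · filter_upwards [eventually_ge_atTop 2] with N hN
      exact (hbounds N hN).1
    · filter_upwards [eventually_ge_atTop 2] with N hN
      exact (hbounds N hN).2
  have h2 := hGNlim.const_mul (1/2 : ℝ)
  have hval : (1/2 : ℝ) * (c * m^2 * (4 * Real.log 2)) = 4 * c * Real.log 2 / 2 * m^2 := by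
    ring
  rw [hval] at h2
  exact Tendsto.congr' (key_eq.mono fun N h => h.symm) h2
end
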